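/- arXiv:2209.15203 — 8 statements merged into one kernel-verified Lean document; each statement's English description precedes it below -/
import Mathlib

section
/- Let d ≥ 1, 1 ≤ K ≤ d, and let w ∈ ℝ^d. Let S be any set of K coordinates carrying the largest absolute values of w (i.e., |w_j| ≤ |w_i| for every i ∈ S and every j ∉ S), and let Top_K(w) be the vector that equals w on S and is zero outside S. Then ‖Top_K(w) − w‖₂² ≤ ((d − K)/d) · ‖w‖₂². -/
/-- For `w ∈ ℝ^d`, `1 ≤ K ≤ d`, and a top-K truncation of `w` along a set `S`
of `K` coordinates carrying the largest absolute values,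
`‖Top_K(w) − w‖₂² ≤ ((d − K)/d) ‖w‖₂²`. -/
theorem topK_sub_self_sq_le {d K : ℕ} (hd : 1 ≤ d) (hK1 : 1 ≤ K) (hKd : K ≤ d)
    (w : EuclideanSpace ℝ (Fin d)) (S : Finset (Fin d)) (hScard : S.card = K)
    (hS : ∀ i ∈ S, ∀ j ∉ S, |w j| ≤ |w i|)
    (topK : EuclideanSpace ℝ (Fin d))
    (htopK : ∀ i, topK i = if i ∈ S then w i else 0) :
    ‖topK - w‖ ^ 2 ≤ ((d - K : ℝ) / d) * ‖w‖ ^ 2 := by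
  have hnorm1 : ‖topK - w‖ ^ 2 = ∑ i, ((topK - w) i) ^ 2 := by
    rw [EuclideanSpace.norm_eq, Real.sq_sqrt (Finset.sum_nonneg fun i _ => sq_nonneg _)]
    simp [sq_abs]
  have hnorm2 : ‖w‖ ^ 2 = ∑ i, (w i) ^ 2 := by
    rw [EuclideanSpace.norm_eq, Real.sq_sqrt (Finset.sum_nonneg fun i _ => sq_nonneg _)]
    simp [sq_abs]
  set A := ∑ i ∈ S, (w i) ^ 2 with hA
  set B := ∑ i ∈ Sᶜ, (w i) ^ 2 with hB
  have hAnn : 0 ≤ A := Finset.sum_nonneg fun i _ => sq_nonneg _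
  have hBnn : 0 ≤ B := Finset.sum_nonneg fun i _ => sq_nonneg _
  have hsplit : ∑ i, (w i) ^ 2 = A + B := (Finset.sum_add_sum_compl S _).symm
  have hdiff : ∑ i, ((topK - w) i) ^ 2 = B := by
    rw [hB, Finset.sum_congr rfl (fun i _ => rfl), ← Finset.sum_add_sum_compl S
      (fun i => ((topK - w) i) ^ 2)]
    have h1 : ∀ i ∈ S, ((topK - w) i) ^ 2 = 0 := by
      intro i hi
      simp [htopK i, hi]
    have h2 : ∀ i ∈ Sᶜ, ((topK - w) i) ^ 2 = (w i) ^ 2 := by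
      intro i hi
      rw [Finset.mem_compl] at hi
      simp [htopK i, hi]
    rw [Finset.sum_congr rfl h1, Finset.sum_congr rfl h2]
    simp
  -- key: K * B ≤ (d - K) * A
  have hcompl : Sᶜ.card = d - K := by
    rw [Finset.card_compl, hScard]; simp
  have hkey : (K : ℝ) * B ≤ ((d : ℝ) - K) * A := by
    have hterm : ∀ j ∈ Sᶜ, (K : ℝ) * (w j) ^ 2 ≤ A := by
      intro j hj
      rw [Finset.mem_compl] at hj
      calc (K : ℝ) * (w j) ^ 2 = ∑ i ∈ S, (w j) ^ 2 := by
            rw [Finset.sum_const, hScard, nsmul_eq_mul]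
        _ ≤ A := Finset.sum_le_sum fun i hi => by
            have := hS i hi j hj
            rw [← sq_abs (w j), ← sq_abs (w i)]
            exact pow_le_pow_left₀ (abs_nonneg _) this 2
    calc (K : ℝ) * B = ∑ j ∈ Sᶜ, (K : ℝ) * (w j) ^ 2 := by rw [Finset.mul_sum]
      _ ≤ ∑ j ∈ Sᶜ, A := Finset.sum_le_sum hterm
      _ = ((d : ℝ) - K) * A := by
          rw [Finset.sum_const, hcompl, nsmul_eq_mul, Nat.cast_sub hKd]
  rw [hnorm1, hnorm2, hdiff, hsplit]
  rw [div_mul_eq_mul_div, le_div_iff₀ (by positivity)]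
  nlinarith [hkey]
end

section
/- (Lemma 1, bidirectional error-corrected recursion.) For the bidirectional compressed SGD iterates with an arbitrary compressor map C : ℝ^d → ℝ^d, arbitrary weights p_1,…,p_N ∈ ℝ, step sizes (α_t)_{t≥0}, and arbitrary gradient vectors (g_t^q), the error-corrected iterate satisfies, for every t ≥ 1, w̃_t = w̃_{t−1} − α_{t−1} Σ_{q=1}^N p_q g_{t−1}^q. -/
open Finset

/-- Lemma 1, bidirectional error-corrected recursion: for the bidirectional
compressed SGD iterates, the error-corrected iterate satisfies
`w̃_t = w̃_{t−1} − α_{t−1} Σ_q p_q g_{t−1}^q` for every `t ≥ 1`. -/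
theorem bidirectional_error_corrected_recursion
    {d N : ℕ} (hd : 1 ≤ d) (hN : 1 ≤ N)
    (p : Fin N → ℝ) (α : ℕ → ℝ)
    (C : EuclideanSpace ℝ (Fin d) → EuclideanSpace ℝ (Fin d))
    (g : ℕ → Fin N → EuclideanSpace ℝ (Fin d))
    (w₀ : EuclideanSpace ℝ (Fin d))
    (a ε : ℕ → Fin N → EuclideanSpace ℝ (Fin d))
    (G δ w wtil : ℕ → EuclideanSpace ℝ (Fin d))
    (hε0 : ∀ q, ε 0 q = 0) (hδ0 : δ 0 = 0) (hw0 : w 0 = w₀)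
    (ha : ∀ t q, a (t + 1) q = ε t q + α t • g t q)
    (hε : ∀ t q, ε (t + 1) q = a (t + 1) q - C (a (t + 1) q))
    (hG : ∀ t, G (t + 1) = ∑ q, p q • C (a (t + 1) q) + δ t)
    (hδ : ∀ t, δ (t + 1) = G (t + 1) - C (G (t + 1)))
    (hw : ∀ t, w (t + 1) = w t - C (G (t + 1)))
    (hwtil : ∀ t, wtil t = w t - ∑ q, p q • ε t q - δ t) :
    ∀ t, wtil (t + 1) = wtil t - α t • ∑ q, p q • g t q := by
  intro t
  simp only [hwtil, hw, hε, ha, hG, hδ, smul_add, smul_sub, Finset.sum_add_distrib,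
    Finset.sum_sub_distrib, Finset.smul_sum, smul_smul, mul_comm]
  abel
end

section
/- (One-step gap bound, bidirectional.) Suppose the compressor C satisfies ‖C(x) − x‖₂² ≤ (1 − γ)‖x‖₂² for all x ∈ ℝ^d with γ ∈ (0,1), and suppose that at step t ≥ 1 the iterates satisfy ‖C(δ_{t−1} + Σ_{q=1}^N p_q a_t^q) − C(δ_{t−1} + Σ_{q=1}^N p_q C(a_t^q))‖₂ ≤ ρ ‖α_{t−1} Σ_{q=1}^N p_q g_{t−1}^q‖₂ for some ρ > 0. Then ‖w_t − w̃_t‖₂ ≤ √(1 − γ) ‖w_{t−1} − w̃_{t−1}‖₂ + (√(1 − γ) + ρ) ‖w̃_t − w̃_{t−1}‖₂. -/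
open Finset

/-- one-step gap bound, bidirectional: if `C` is a `γ`-approximate compressor
and at step `t+1` the gap assumption holds with constant `ρ`, then
`‖w_{t+1} − w̃_{t+1}‖ ≤ √(1−γ) ‖w_t − w̃_t‖ + (√(1−γ) + ρ) ‖w̃_{t+1} − w̃_t‖`. -/
theorem bidirectional_one_step_gap_bound
    {d N : ℕ} (hd : 1 ≤ d) (hN : 1 ≤ N)
    (p : Fin N → ℝ) (α : ℕ → ℝ)
    (C : EuclideanSpace ℝ (Fin d) → EuclideanSpace ℝ (Fin d))
    (g : ℕ → Fin N → EuclideanSpace ℝ (Fin d))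
    (w₀ : EuclideanSpace ℝ (Fin d))
    (a ε : ℕ → Fin N → EuclideanSpace ℝ (Fin d))
    (G δ w wtil : ℕ → EuclideanSpace ℝ (Fin d))
    (hε0 : ∀ q, ε 0 q = 0) (hδ0 : δ 0 = 0) (hw0 : w 0 = w₀)
    (ha : ∀ s q, a (s + 1) q = ε s q + α s • g s q)
    (hε : ∀ s q, ε (s + 1) q = a (s + 1) q - C (a (s + 1) q))
    (hG : ∀ s, G (s + 1) = ∑ q, p q • C (a (s + 1) q) + δ s)
    (hδ : ∀ s, δ (s + 1) = G (s + 1) - C (G (s + 1)))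
    (hw : ∀ s, w (s + 1) = w s - C (G (s + 1)))
    (hwtil : ∀ s, wtil s = w s - ∑ q, p q • ε s q - δ s)
    {γ : ℝ} (hγ0 : 0 < γ) (hγ1 : γ < 1)
    (hC : ∀ x, ‖C x - x‖ ^ 2 ≤ (1 - γ) * ‖x‖ ^ 2)
    {ρ : ℝ} (hρ : 0 < ρ) (t : ℕ)
    (hgap : ‖C (δ t + ∑ q, p q • a (t + 1) q) -
        C (δ t + ∑ q, p q • C (a (t + 1) q))‖ ≤ ρ * ‖α t • ∑ q, p q • g t q‖) :
    ‖w (t + 1) - wtil (t + 1)‖ ≤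
      Real.sqrt (1 - γ) * ‖w t - wtil t‖ +
        (Real.sqrt (1 - γ) + ρ) * ‖wtil (t + 1) - wtil t‖ := by

  set v : EuclideanSpace ℝ (Fin d) := α t • ∑ q, p q • g t q with hv
  set X : EuclideanSpace ℝ (Fin d) := δ t + ∑ q, p q • a (t + 1) q with hX
  have hsumA : ∑ q, p q • a (t + 1) q = (∑ q, p q • ε t q) + v := by
    simp only [ha, smul_add, Finset.sum_add_distrib, hv, Finset.smul_sum]
    congr 1
    exact Finset.sum_congr rfl fun q _ => smul_comm _ _ _
  have hG' : G (t + 1) = δ t + ∑ q, p q • C (a (t + 1) q) := by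
    rw [hG]; abel
  have h1 : w (t + 1) - wtil (t + 1) = X - C (G (t + 1)) := by
    rw [hwtil, hw, hδ, hG, hX]
    simp only [hε, smul_sub, Finset.sum_sub_distrib]
    abel
  have h2 : wtil (t + 1) - wtil t = -v := by
    have hw1 : wtil (t + 1) = w (t + 1) - (X - C (G (t + 1))) := by
      rw [← h1]; abel
    rw [hw1, hw t, hwtil t, hX, hsumA]
    abel
  have h3 : X = (w t - wtil t) + v := by
    rw [hX, hsumA, hwtil t]; abel
  have hnv : ‖wtil (t + 1) - wtil t‖ = ‖v‖ := by rw [h2, norm_neg]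
  have hbound1 : ‖X - C X‖ ≤ Real.sqrt (1 - γ) * ‖X‖ := by
    calc ‖X - C X‖ = Real.sqrt (‖C X - X‖ ^ 2) := by
          rw [Real.sqrt_sq (norm_nonneg _), norm_sub_rev]
      _ ≤ Real.sqrt ((1 - γ) * ‖X‖ ^ 2) := Real.sqrt_le_sqrt (hC X)
      _ = Real.sqrt (1 - γ) * ‖X‖ := by
          rw [Real.sqrt_mul (by linarith), Real.sqrt_sq (norm_nonneg _)]
  have hbound2 : ‖C X - C (G (t + 1))‖ ≤ ρ * ‖v‖ := by rw [hG']; exact hgap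
  have hmain : ‖w (t + 1) - wtil (t + 1)‖ ≤ Real.sqrt (1 - γ) * ‖X‖ + ρ * ‖v‖ := by
    calc ‖w (t + 1) - wtil (t + 1)‖ = ‖(X - C X) + (C X - C (G (t + 1)))‖ := by
          rw [h1]; congr 1; abel
      _ ≤ ‖X - C X‖ + ‖C X - C (G (t + 1))‖ := norm_add_le _ _
      _ ≤ _ := add_le_add hbound1 hbound2
  have hXnorm : ‖X‖ ≤ ‖w t - wtil t‖ + ‖v‖ := h3 ▸ norm_add_le _ _
  have hs : (0:ℝ) ≤ Real.sqrt (1 - γ) := Real.sqrt_nonneg _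
  rw [hnv]
  nlinarith [mul_le_mul_of_nonneg_left hXnorm hs]
end

section
/- (Lemma 2.) Suppose the compressor C satisfies ‖C(x) − x‖₂² ≤ (1 − γ)‖x‖₂² for all x ∈ ℝ^d with γ ∈ (0,1), and suppose that for every s with 1 ≤ s ≤ t the iterates satisfy ‖C(δ_{s−1} + Σ_{q=1}^N p_q a_s^q) − C(δ_{s−1} + Σ_{q=1}^N p_q C(a_s^q))‖₂ ≤ ρ ‖α_{s−1} Σ_{q=1}^N p_q g_{s−1}^q‖₂ for some ρ > 0. Then for every λ > 0, ‖w_t − w̃_t‖₂² ≤ (1/λ)(√(1 − γ) + ρ)² · (1/(1 − γ)) · Σ_{i=1}^t ((1 + λ)(1 − γ))^i ‖w̃_{t−i+1} − w̃_{t−i}‖₂². -/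
open Finset

/-- Lemma 2: if `C` is a `γ`-approximate compressor and the gap assumption
holds with constant `ρ` at every step `s` with `1 ≤ s ≤ t`, then for every `λ > 0`,
`‖w_t − w̃_t‖² ≤ (1/λ)(√(1−γ)+ρ)² (1/(1−γ)) Σ_{i=1}^t ((1+λ)(1−γ))^i ‖w̃_{t−i+1} − w̃_{t−i}‖²`. -/
theorem bidirectional_gap_bound
    {d N : ℕ} (hd : 1 ≤ d) (hN : 1 ≤ N)
    (p : Fin N → ℝ) (α : ℕ → ℝ)
    (C : EuclideanSpace ℝ (Fin d) → EuclideanSpace ℝ (Fin d))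
    (g : ℕ → Fin N → EuclideanSpace ℝ (Fin d))
    (w₀ : EuclideanSpace ℝ (Fin d))
    (a ε : ℕ → Fin N → EuclideanSpace ℝ (Fin d))
    (G δ w wtil : ℕ → EuclideanSpace ℝ (Fin d))
    (hε0 : ∀ q, ε 0 q = 0) (hδ0 : δ 0 = 0) (hw0 : w 0 = w₀)
    (ha : ∀ s q, a (s + 1) q = ε s q + α s • g s q)
    (hε : ∀ s q, ε (s + 1) q = a (s + 1) q - C (a (s + 1) q))
    (hG : ∀ s, G (s + 1) = ∑ q, p q • C (a (s + 1) q) + δ s)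
    (hδ : ∀ s, δ (s + 1) = G (s + 1) - C (G (s + 1)))
    (hw : ∀ s, w (s + 1) = w s - C (G (s + 1)))
    (hwtil : ∀ s, wtil s = w s - ∑ q, p q • ε s q - δ s)
    {γ : ℝ} (hγ0 : 0 < γ) (hγ1 : γ < 1)
    (hC : ∀ x, ‖C x - x‖ ^ 2 ≤ (1 - γ) * ‖x‖ ^ 2)
    {ρ : ℝ} (hρ : 0 < ρ) (t : ℕ)
    (hgap : ∀ s < t, ‖C (δ s + ∑ q, p q • a (s + 1) q) -
        C (δ s + ∑ q, p q • C (a (s + 1) q))‖ ≤ ρ * ‖α s • ∑ q, p q • g s q‖) :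
    ∀ lam : ℝ, 0 < lam →
      ‖w t - wtil t‖ ^ 2 ≤
        (1 / lam) * (Real.sqrt (1 - γ) + ρ) ^ 2 * (1 / (1 - γ)) *
          ∑ i ∈ Icc 1 t, ((1 + lam) * (1 - γ)) ^ i *
            ‖wtil (t - i + 1) - wtil (t - i)‖ ^ 2 := by
  intro lam hlam
  have h1γ : (0:ℝ) < 1 - γ := by linarith
  set β := Real.sqrt (1 - γ) with hβ
  have hβ0 : 0 ≤ β := Real.sqrt_nonneg _
  have hβsq : β ^ 2 = 1 - γ := Real.sq_sqrt h1γ.le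
  set K := β + ρ with hK
  have hK0 : 0 ≤ K := by positivity
  set D : ℕ → ℝ := fun s => ‖wtil (s + 1) - wtil s‖ with hD
  -- basic identities
  have hwminus : ∀ s, w s - wtil s = (∑ q, p q • ε s q) + δ s := by
    intro s; rw [hwtil s]; abel
  have hG' : ∀ s, G (s + 1) = δ s + ∑ q, p q • C (a (s + 1) q) := by
    intro s; rw [hG s]; abel
  have hE : ∀ s, w (s + 1) - wtil (s + 1) =
      (δ s + ∑ q, p q • a (s + 1) q) - C (δ s + ∑ q, p q • C (a (s + 1) q)) := by
    intro s
    rw [hwminus (s + 1), hδ s, hG' s]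
    simp only [hε, smul_sub, Finset.sum_sub_distrib]
    abel
  have hA : ∀ s, δ s + ∑ q, p q • a (s + 1) q =
      (w s - wtil s) + α s • ∑ q, p q • g s q := by
    intro s
    rw [hwminus s, Finset.smul_sum]
    simp only [ha, smul_add, Finset.sum_add_distrib]
    rw [Finset.sum_congr rfl (fun q _ => smul_comm (p q) (α s) (g s q))]
    abel
  have hΔ : ∀ s, wtil (s + 1) - wtil s = -(α s • ∑ q, p q • g s q) := by
    intro s
    have e1 := hE s
    have e2 := hA s
    have e3 := hw s
    rw [hG' s] at e3
    have e4 : wtil (s + 1) = w (s + 1) - (w (s + 1) - wtil (s + 1)) := by abel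
    rw [e4, e1, e2, e3]
    abel
  -- compressor contraction in norm form
  have hCnorm : ∀ x : EuclideanSpace ℝ (Fin d), ‖C x - x‖ ≤ β * ‖x‖ := by
    intro x
    have h1 : ‖C x - x‖ = Real.sqrt (‖C x - x‖ ^ 2) := by
      rw [Real.sqrt_sq (norm_nonneg _)]
    rw [h1]
    calc Real.sqrt (‖C x - x‖ ^ 2) ≤ Real.sqrt ((1 - γ) * ‖x‖ ^ 2) :=
          Real.sqrt_le_sqrt (hC x)
      _ = β * ‖x‖ := by
          rw [Real.sqrt_mul h1γ.le, Real.sqrt_sq (norm_nonneg _)]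
  -- one-step recursion
  have hrec : ∀ s, s < t → ‖w (s + 1) - wtil (s + 1)‖ ≤
      β * ‖w s - wtil s‖ + K * D s := by
    intro s hs
    have e1 := hE s
    set A := δ s + ∑ q, p q • a (s + 1) q with hA'
    set B := δ s + ∑ q, p q • C (a (s + 1) q) with hB'
    have hDs : D s = ‖α s • ∑ q, p q • g s q‖ := by
      rw [hD]; simp only; rw [hΔ s, norm_neg]
    have split : A - C B = -(C A - A) + (C A - C B) := by abel
    have h2 : ‖A - C B‖ ≤ ‖C A - A‖ + ‖C A - C B‖ := by
      rw [split]
      calc ‖-(C A - A) + (C A - C B)‖ ≤ ‖-(C A - A)‖ + ‖C A - C B‖ := norm_add_le _ _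
        _ = ‖C A - A‖ + ‖C A - C B‖ := by rw [norm_neg]
    have h3 : ‖C A - A‖ ≤ β * ‖A‖ := hCnorm A
    have h4 : ‖C A - C B‖ ≤ ρ * D s := by rw [hDs]; exact hgap s hs
    have h5 : ‖A‖ ≤ ‖w s - wtil s‖ + D s := by
      rw [hA', hA s, hDs]
      exact norm_add_le _ _
    rw [e1]
    have h6 : β * ‖A‖ ≤ β * (‖w s - wtil s‖ + D s) :=
      mul_le_mul_of_nonneg_left h5 hβ0
    calc ‖A - C B‖ ≤ ‖C A - A‖ + ‖C A - C B‖ := h2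
      _ ≤ β * ‖A‖ + ρ * D s := add_le_add h3 h4
      _ ≤ β * (‖w s - wtil s‖ + D s) + ρ * D s := by linarith
      _ = β * ‖w s - wtil s‖ + K * D s := by rw [hK]; ring
  have hD0 : ∀ s, 0 ≤ D s := fun s => norm_nonneg _
  -- unrolled bound
  have hun : ∀ m, m ≤ t →
      ‖w m - wtil m‖ ≤ K * ∑ j ∈ range m, β ^ j * D (m - 1 - j) := by
    intro m
    induction m with
    | zero =>
        intro _
        have h0 : w 0 - wtil 0 = 0 := by
          rw [hwtil 0, hδ0]
          simp [hε0]
        rw [h0]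
        simp
    | succ m ih =>
        intro hm1
        have hmt : m < t := hm1
        have ihm := ih hmt.le
        have hr := hrec m hmt
        have hsum : ∑ j ∈ range (m + 1), β ^ j * D (m + 1 - 1 - j) =
            D m + β * ∑ j ∈ range m, β ^ j * D (m - 1 - j) := by
          rw [Finset.sum_range_succ']
          rw [Finset.mul_sum]
          have : ∀ j ∈ range m, β ^ (j + 1) * D (m + 1 - 1 - (j + 1)) =
              β * (β ^ j * D (m - 1 - j)) := by
            intro j hj
            rw [show m + 1 - 1 - (j + 1) = m - 1 - j from by omega]
            ring
          rw [Finset.sum_congr rfl this]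
          simp only [pow_zero, one_mul]
          rw [show m + 1 - 1 - 0 = m from by omega]
          ring
        rw [hsum]
        have h7 : β * ‖w m - wtil m‖ ≤
            β * (K * ∑ j ∈ range m, β ^ j * D (m - 1 - j)) :=
          mul_le_mul_of_nonneg_left ihm hβ0
        calc ‖w (m + 1) - wtil (m + 1)‖ ≤ β * ‖w m - wtil m‖ + K * D m := hr
          _ ≤ β * (K * ∑ j ∈ range m, β ^ j * D (m - 1 - j)) + K * D m := by linarith
          _ = K * (D m + β * ∑ j ∈ range m, β ^ j * D (m - 1 - j)) := by ring
  have hmain := hun t le_rfl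
  -- geometric sum bound
  set r : ℝ := (1 + lam)⁻¹ with hr
  have hlam1 : (0:ℝ) < 1 + lam := by linarith
  have hr0 : 0 ≤ r := by positivity
  have hlr : lam * r = 1 - r := by
    rw [hr]; field_simp; ring
  have hgeom : ∑ j ∈ range t, r ^ (j + 1) ≤ 1 / lam := by
    have h1 : lam * ∑ j ∈ range t, r ^ (j + 1) = (1 - r) * ∑ j ∈ range t, r ^ j := by
      rw [Finset.mul_sum, Finset.mul_sum]
      refine Finset.sum_congr rfl fun j _ => ?_
      calc lam * r ^ (j + 1) = (lam * r) * r ^ j := by ring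
        _ = (1 - r) * r ^ j := by rw [hlr]
    have h2 := geom_sum_mul r t
    have h3 : (1 - r) * ∑ j ∈ range t, r ^ j = 1 - r ^ t := by
      have : (∑ i ∈ range t, r ^ i) * (r - 1) = r ^ t - 1 := h2
      linarith [this]
    have h4 : (0:ℝ) ≤ r ^ t := pow_nonneg hr0 t
    have h5 : lam * ∑ j ∈ range t, r ^ (j + 1) ≤ 1 := by
      rw [h1, h3]; linarith
    rw [le_div_iff₀ hlam, mul_comm]
    linarith
  -- Cauchy–Schwarz
  set sr := Real.sqrt r with hsr
  set sl := Real.sqrt (1 + lam) with hsl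
  have hsrsl : sr * sl = 1 := by
    rw [hsr, hsl, ← Real.sqrt_mul hr0]
    rw [show r * (1 + lam) = 1 from by rw [hr]; field_simp]
    exact Real.sqrt_one
  have hsr2 : sr ^ 2 = r := Real.sq_sqrt hr0
  have hsl2 : sl ^ 2 = 1 + lam := Real.sq_sqrt hlam1.le
  set f : ℕ → ℝ := fun j => sr ^ (j + 1) with hf
  set G2 : ℕ → ℝ := fun j => sl ^ (j + 1) * (β ^ j * D (t - 1 - j)) with hG2
  have hfg : ∀ j, f j * G2 j = β ^ j * D (t - 1 - j) := by
    intro j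
    have : sr ^ (j + 1) * sl ^ (j + 1) = 1 := by
      rw [← mul_pow, hsrsl, one_pow]
    calc f j * G2 j = (sr ^ (j + 1) * sl ^ (j + 1)) * (β ^ j * D (t - 1 - j)) := by
          rw [hf, hG2]; ring
      _ = β ^ j * D (t - 1 - j) := by rw [this, one_mul]
  have hCS := Finset.sum_mul_sq_le_sq_mul_sq (range t) f G2
  have hf2 : ∀ j, f j ^ 2 = r ^ (j + 1) := by
    intro j; rw [hf]; simp only; rw [← pow_mul, mul_comm (j+1) 2, pow_mul, hsr2]
  have hG22 : ∀ j, G2 j ^ 2 = (1 + lam) ^ (j + 1) * ((1 - γ) ^ j * D (t - 1 - j) ^ 2) := by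
    intro j
    rw [hG2]
    simp only
    rw [mul_pow, mul_pow, ← pow_mul, mul_comm (j+1) 2, pow_mul, hsl2,
        ← pow_mul, mul_comm j 2, pow_mul, hβsq]
  set S := ∑ j ∈ range t, β ^ j * D (t - 1 - j) with hS
  set T := ∑ j ∈ range t, (1 + lam) ^ (j + 1) * ((1 - γ) ^ j * D (t - 1 - j) ^ 2) with hT
  have hS0 : 0 ≤ S := by
    apply Finset.sum_nonneg
    intro j _
    positivity
  have hT0 : 0 ≤ T := by
    apply Finset.sum_nonneg
    intro j _
    positivity
  have hCS' : S ^ 2 ≤ (∑ j ∈ range t, r ^ (j + 1)) * T := by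
    have e1 : S = ∑ j ∈ range t, f j * G2 j :=
      (Finset.sum_congr rfl fun j _ => (hfg j).symm)
    have e2 : ∑ j ∈ range t, f j ^ 2 = ∑ j ∈ range t, r ^ (j + 1) :=
      Finset.sum_congr rfl fun j _ => hf2 j
    have e3 : ∑ j ∈ range t, G2 j ^ 2 = T :=
      Finset.sum_congr rfl fun j _ => hG22 j
    rw [e1, ← e2, ← e3]
    exact hCS
  have hSq : S ^ 2 ≤ (1 / lam) * T := by
    have hq0 : (0:ℝ) ≤ ∑ j ∈ range t, r ^ (j + 1) :=
      Finset.sum_nonneg fun j _ => pow_nonneg hr0 _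
    calc S ^ 2 ≤ (∑ j ∈ range t, r ^ (j + 1)) * T := hCS'
      _ ≤ (1 / lam) * T := mul_le_mul_of_nonneg_right hgeom hT0
  have hmain2 : ‖w t - wtil t‖ ^ 2 ≤ K ^ 2 * ((1 / lam) * T) := by
    have h8 : ‖w t - wtil t‖ ^ 2 ≤ (K * S) ^ 2 := by
      apply pow_le_pow_left₀ (norm_nonneg _) hmain
    have h9 : (K * S) ^ 2 = K ^ 2 * S ^ 2 := by ring
    have h10 : K ^ 2 * S ^ 2 ≤ K ^ 2 * ((1 / lam) * T) :=
      mul_le_mul_of_nonneg_left hSq (by positivity)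
    calc ‖w t - wtil t‖ ^ 2 ≤ (K * S) ^ 2 := h8
      _ = K ^ 2 * S ^ 2 := h9
      _ ≤ K ^ 2 * (1 / lam * T) := h10
  -- rewrite the target sum
  have htarget : (1 / (1 - γ)) * (∑ i ∈ Icc 1 t, ((1 + lam) * (1 - γ)) ^ i *
      ‖wtil (t - i + 1) - wtil (t - i)‖ ^ 2) = T := by
    rw [← Finset.Ico_add_one_right_eq_Icc, Finset.sum_Ico_eq_sum_range]
    simp only [Nat.succ_sub_one, Nat.add_sub_cancel]
    rw [hT, Finset.mul_sum]
    refine Finset.sum_congr rfl fun j hj => ?_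
    have hjt : j < t := Finset.mem_range.mp hj
    have e5 : t - (1 + j) = t - 1 - j := by omega
    have e6 : t - (1 + j) + 1 = (t - 1 - j) + 1 := by omega
    rw [e6, e5]
    have e7 : ((1 + lam) * (1 - γ)) ^ (1 + j) =
        (1 + lam) ^ (j + 1) * ((1 - γ) ^ j * (1 - γ)) := by
      rw [mul_pow]
      rw [show 1 + j = j + 1 from by omega]
      rw [pow_succ (1 - γ) j]
    rw [e7, show D (t - 1 - j) = ‖wtil (t - 1 - j + 1) - wtil (t - 1 - j)‖ from rfl]
    field_simp
  calc ‖w t - wtil t‖ ^ 2 ≤ K ^ 2 * ((1 / lam) * T) := hmain2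
    _ = (1 / lam) * K ^ 2 * (1 / (1 - γ)) * (∑ i ∈ Icc 1 t, ((1 + lam) * (1 - γ)) ^ i *
          ‖wtil (t - i + 1) - wtil (t - i)‖ ^ 2) := by
        rw [show (1 / lam) * K ^ 2 * (1 / (1 - γ)) * (∑ i ∈ Icc 1 t, ((1 + lam) * (1 - γ)) ^ i *
          ‖wtil (t - i + 1) - wtil (t - i)‖ ^ 2) = (1/lam) * K ^ 2 *
            ((1 / (1 - γ)) * (∑ i ∈ Icc 1 t, ((1 + lam) * (1 - γ)) ^ i *
          ‖wtil (t - i + 1) - wtil (t - i)‖ ^ 2)) from by ring, htarget]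
        ring
    _ = _ := by rw [hK, hβ]
end

section
/- (Lemma 3.) Let (Ω, ℱ, ℙ) be a probability space and let the stochastic gradients g_t^q : Ω → ℝ^d be random vectors, so that the bidirectional compressed SGD iterates w_t, w̃_t are random vectors defined pathwise. Assume: (i) the compressor C satisfies ‖C(x) − x‖₂² ≤ (1 − γ)‖x‖₂² for all x ∈ ℝ^d with γ ∈ (0,1); (ii) almost surely, for every t ≥ 1, ‖C(δ_{t−1} + Σ_q p_q a_t^q) − C(δ_{t−1} + Σ_q p_q C(a_t^q))‖₂ ≤ ρ ‖α_{t−1} Σ_q p_q g_{t−1}^q‖₂ for some ρ > 0; (iii) E[‖Σ_{q=1}^N p_q g_t^q‖₂²] ≤ M for all t ≥ 0; (iv) the step sizes satisfy α_t > 0 and, for some λ > 0 and D > 0, (1/(1 − γ)) Σ_{i=1}^t ((1 + λ)(1 − γ))^i α_{t−i}²/α_t ≤ D for every t ≥ 1. Then for every t ≥ 1, E[‖w_t − w̃_t‖₂²] ≤ (M/λ)(√(1 − γ) + ρ)² α_t D. -/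
open Finset MeasureTheory

private lemma aux_calc_bidir {lam c M D A : ℝ} (hlam : 0 < lam) :
    (1 + 1/lam) * c * M * (D * A / (1 + lam)) = (M / lam) * c * A * D := by
  have h1 : lam ≠ 0 := hlam.ne'
  have h2 : (1:ℝ) + lam ≠ 0 := by positivity
  field_simp
  ring

/-- Lemma 3: expectation bound on the gap between the bidirectional
compressed SGD iterates and the error-corrected iterates:
`E[‖w_t − w̃_t‖²] ≤ (M/λ)(√(1−γ)+ρ)² α_t D` for every `t ≥ 1`. -/
theorem bidirectional_expected_gap_bound
    {d N : ℕ} (hd : 1 ≤ d) (hN : 1 ≤ N)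
    {Ω : Type*} [MeasurableSpace Ω] (μ : Measure Ω) [IsProbabilityMeasure μ]
    (p : Fin N → ℝ) (α : ℕ → ℝ)
    (C : EuclideanSpace ℝ (Fin d) → EuclideanSpace ℝ (Fin d))
    (g : ℕ → Fin N → Ω → EuclideanSpace ℝ (Fin d))
    (w₀ : EuclideanSpace ℝ (Fin d))
    (a ε : ℕ → Fin N → Ω → EuclideanSpace ℝ (Fin d))
    (G δ w wtil : ℕ → Ω → EuclideanSpace ℝ (Fin d))
    -- pathwise definition of the iterates
    (hε0 : ∀ q ω, ε 0 q ω = 0) (hδ0 : ∀ ω, δ 0 ω = 0) (hw0 : ∀ ω, w 0 ω = w₀)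
    (ha : ∀ s q ω, a (s + 1) q ω = ε s q ω + α s • g s q ω)
    (hε : ∀ s q ω, ε (s + 1) q ω = a (s + 1) q ω - C (a (s + 1) q ω))
    (hG : ∀ s ω, G (s + 1) ω = ∑ q, p q • C (a (s + 1) q ω) + δ s ω)
    (hδ : ∀ s ω, δ (s + 1) ω = G (s + 1) ω - C (G (s + 1) ω))
    (hw : ∀ s ω, w (s + 1) ω = w s ω - C (G (s + 1) ω))
    (hwtil : ∀ s ω, wtil s ω = w s ω - ∑ q, p q • ε s q ω - δ s ω)
    -- measurability and square-integrability of the iterates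
    (hmeas_w : ∀ s, Measurable (w s)) (hmeas_wtil : ∀ s, Measurable (wtil s))
    (hmeas_g : ∀ s q, Measurable (g s q))
    (hsq_gap : ∀ s, Integrable (fun ω => ‖w s ω - wtil s ω‖ ^ 2) μ)
    (hsq_g : ∀ s, Integrable (fun ω => ‖∑ q, p q • g s q ω‖ ^ 2) μ)
    -- (i) γ-approximate compressor
    {γ : ℝ} (hγ0 : 0 < γ) (hγ1 : γ < 1)
    (hC : ∀ x, ‖C x - x‖ ^ 2 ≤ (1 - γ) * ‖x‖ ^ 2)
    -- (ii) a.s. gap assumption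
    {ρ : ℝ} (hρ : 0 < ρ)
    (hgap : ∀ᵐ ω ∂μ, ∀ s, ‖C (δ s ω + ∑ q, p q • a (s + 1) q ω) -
        C (δ s ω + ∑ q, p q • C (a (s + 1) q ω))‖ ≤ ρ * ‖α s • ∑ q, p q • g s q ω‖)
    -- (iii) second-moment bound
    {M : ℝ} (hM : ∀ s, ∫ ω, ‖∑ q, p q • g s q ω‖ ^ 2 ∂μ ≤ M)
    -- (iv) step-size condition
    (hα : ∀ s, 0 < α s) {lam D : ℝ} (hlam : 0 < lam) (hD : 0 < D)
    (hstep : ∀ t : ℕ, 1 ≤ t →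
      (1 / (1 - γ)) * ∑ i ∈ Icc 1 t, ((1 + lam) * (1 - γ)) ^ i * (α (t - i)) ^ 2 / α t ≤ D) :
    ∀ t : ℕ, 1 ≤ t →
      ∫ ω, ‖w t ω - wtil t ω‖ ^ 2 ∂μ ≤
        (M / lam) * (Real.sqrt (1 - γ) + ρ) ^ 2 * α t * D := by

  have hγ' : (0:ℝ) ≤ 1 - γ := by linarith
  have hγ'' : (0:ℝ) < 1 - γ := by linarith
  have hlam1 : (0:ℝ) < 1 + lam := by linarith
  have h1l : (0:ℝ) ≤ 1 + 1/lam := by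
    have := one_div_pos.mpr hlam; linarith
  have hM0 : 0 ≤ M := le_trans (integral_nonneg fun ω => sq_nonneg _) (hM 0)
  have hKpos : (0:ℝ) < (1+lam)*(1-γ) := mul_pos hlam1 hγ''
  have hCx : ∀ x, ‖C x - x‖ ≤ Real.sqrt (1-γ) * ‖x‖ := by
    intro x
    have h2 : ‖C x - x‖ ≤ Real.sqrt ((1-γ) * ‖x‖^2) := by
      rw [← Real.sqrt_sq (norm_nonneg (C x - x))]
      exact Real.sqrt_le_sqrt (hC x)
    rwa [Real.sqrt_mul hγ', Real.sqrt_sq (norm_nonneg x)] at h2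
  have young : ∀ A B : ℝ, (A+B)^2 ≤ (1+lam)*A^2 + (1+1/lam)*B^2 := by
    intro A B
    have h1 : lam * (1/lam) = 1 := by field_simp
    have key : lam * (A+B)^2 ≤ lam * ((1+lam)*A^2 + (1+1/lam)*B^2) := by
      nlinarith [sq_nonneg (lam*A - B)]
    exact le_of_mul_le_mul_left key hlam
  have hE : ∀ s ω, w s ω - wtil s ω = ∑ q, p q • ε s q ω + δ s ω := by
    intro s ω; rw [hwtil]; abel
  -- a.e. pointwise one-step recursion
  have hae : ∀ᵐ ω ∂μ, ∀ s, ‖w (s+1) ω - wtil (s+1) ω‖^2 ≤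
      ((1+lam)*(1-γ)) * ‖w s ω - wtil s ω‖^2
      + (1+1/lam) * (Real.sqrt (1-γ)+ρ)^2 * (α s)^2 * ‖∑ q, p q • g s q ω‖^2 := by
    filter_upwards [hgap] with ω hω s
    have hgs := hω s
    set X := δ s ω + ∑ q, p q • a (s+1) q ω with hX
    set Y := δ s ω + ∑ q, p q • C (a (s+1) q ω) with hY
    have hGY : G (s+1) ω = Y := by rw [hG, hY, add_comm]
    have hE1 : w (s+1) ω - wtil (s+1) ω = X - C Y := by
      rw [hwtil, hδ, hGY]
      simp only [hε, smul_sub]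
      rw [Finset.sum_sub_distrib, hX, hY]
      abel
    have hXeq : X = (w s ω - wtil s ω) + α s • ∑ q, p q • g s q ω := by
      have hterm : ∀ q ∈ Finset.univ, p q • a (s+1) q ω
          = p q • ε s q ω + α s • (p q • g s q ω) := by
        intro q _; rw [ha, smul_add, smul_comm]
      rw [hX, Finset.sum_congr rfl hterm, Finset.sum_add_distrib, ← Finset.smul_sum,
        hE s ω]
      abel
    have hXn : ‖X‖ ≤ ‖w s ω - wtil s ω‖ + α s * ‖∑ q, p q • g s q ω‖ := by
      rw [hXeq]
      refine (norm_add_le _ _).trans ?_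
      rw [norm_smul, Real.norm_eq_abs, abs_of_pos (hα s)]
    have hnorm : ‖w (s+1) ω - wtil (s+1) ω‖ ≤
        Real.sqrt (1-γ) * ‖w s ω - wtil s ω‖
        + (Real.sqrt (1-γ)+ρ) * (α s * ‖∑ q, p q • g s q ω‖) := by
      rw [hE1]
      have h1 : ‖X - C Y‖ ≤ ‖C X - X‖ + ‖C X - C Y‖ := by
        have hdec : X - C Y = -(C X - X) + (C X - C Y) := by abel
        rw [hdec]
        exact (norm_add_le _ _).trans (by rw [norm_neg])
      have h2 := hCx X
      have h3 : ‖C X - C Y‖ ≤ ρ * (α s * ‖∑ q, p q • g s q ω‖) := by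
        rwa [norm_smul, Real.norm_eq_abs, abs_of_pos (hα s)] at hgs
      nlinarith [Real.sqrt_nonneg (1-γ), hXn]
    have hsq2 : ‖w (s+1) ω - wtil (s+1) ω‖^2 ≤
        (Real.sqrt (1-γ) * ‖w s ω - wtil s ω‖
          + (Real.sqrt (1-γ)+ρ) * (α s * ‖∑ q, p q • g s q ω‖))^2 :=
      pow_le_pow_left₀ (norm_nonneg _) hnorm 2
    have hyy := young (Real.sqrt (1-γ) * ‖w s ω - wtil s ω‖)
        ((Real.sqrt (1-γ)+ρ) * (α s * ‖∑ q, p q • g s q ω‖))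
    calc ‖w (s+1) ω - wtil (s+1) ω‖^2
        ≤ (Real.sqrt (1-γ) * ‖w s ω - wtil s ω‖
          + (Real.sqrt (1-γ)+ρ) * (α s * ‖∑ q, p q • g s q ω‖))^2 := hsq2
      _ ≤ (1+lam)*(Real.sqrt (1-γ) * ‖w s ω - wtil s ω‖)^2
          + (1+1/lam)*((Real.sqrt (1-γ)+ρ) * (α s * ‖∑ q, p q • g s q ω‖))^2 := hyy
      _ = ((1+lam)*(1-γ)) * ‖w s ω - wtil s ω‖^2
          + (1+1/lam) * (Real.sqrt (1-γ)+ρ)^2 * (α s)^2 * ‖∑ q, p q • g s q ω‖^2 := by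
          simp only [mul_pow]
          rw [Real.sq_sqrt hγ']
          ring
  -- integrated one-step recursion
  have hrec : ∀ s, ∫ ω, ‖w (s+1) ω - wtil (s+1) ω‖^2 ∂μ ≤
      ((1+lam)*(1-γ)) * ∫ ω, ‖w s ω - wtil s ω‖^2 ∂μ
      + (1+1/lam) * (Real.sqrt (1-γ)+ρ)^2 * (α s)^2 * M := by
    intro s
    have hint2 : Integrable (fun ω => ((1+lam)*(1-γ)) * ‖w s ω - wtil s ω‖^2
        + (1+1/lam) * (Real.sqrt (1-γ)+ρ)^2 * (α s)^2 * ‖∑ q, p q • g s q ω‖^2) μ :=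
      ((hsq_gap s).const_mul _).add ((hsq_g s).const_mul _)
    have h1 : ∫ ω, ‖w (s+1) ω - wtil (s+1) ω‖^2 ∂μ ≤
        ∫ ω, (((1+lam)*(1-γ)) * ‖w s ω - wtil s ω‖^2
          + (1+1/lam) * (Real.sqrt (1-γ)+ρ)^2 * (α s)^2 * ‖∑ q, p q • g s q ω‖^2) ∂μ :=
      integral_mono_ae (hsq_gap (s+1)) hint2
        (by filter_upwards [hae] with ω h using h s)
    rw [integral_add ((hsq_gap s).const_mul _) ((hsq_g s).const_mul _),
      integral_const_mul, integral_const_mul] at h1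
    have hcoef : (0:ℝ) ≤ (1+1/lam) * (Real.sqrt (1-γ)+ρ)^2 * (α s)^2 :=
      mul_nonneg (mul_nonneg h1l (sq_nonneg _)) (sq_nonneg _)
    have h2 := mul_le_mul_of_nonneg_left (hM s) hcoef
    linarith
  -- unrolled bound
  have hmain : ∀ t, ∫ ω, ‖w t ω - wtil t ω‖^2 ∂μ ≤
      (1+1/lam) * (Real.sqrt (1-γ)+ρ)^2 * M *
        ∑ i ∈ range t, ((1+lam)*(1-γ))^i * (α (t-1-i))^2 := by
    intro t
    induction t with
    | zero =>
      have hz : ∀ ω : Ω, w 0 ω - wtil 0 ω = 0 := fun ω => by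
        rw [hwtil]
        simp [hε0, hδ0]
      simp [hz]
    | succ t ih =>
      have hT : ∑ i ∈ range (t+1), ((1+lam)*(1-γ))^i * (α (t+1-1-i))^2
          = (α t)^2 + ((1+lam)*(1-γ)) *
            ∑ i ∈ range t, ((1+lam)*(1-γ))^i * (α (t-1-i))^2 := by
        rw [Finset.sum_range_succ', Finset.mul_sum, add_comm]
        congr 1
        · simp
        · refine Finset.sum_congr rfl fun i _ => ?_
          have hidx : t + 1 - 1 - (i+1) = t - 1 - i := by omega
          rw [hidx, pow_succ]
          ring
      have hK0 := hKpos.le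
      have hstep1 := hrec t
      have hmul := mul_le_mul_of_nonneg_left ih hK0
      calc ∫ ω, ‖w (t+1) ω - wtil (t+1) ω‖^2 ∂μ
          ≤ ((1+lam)*(1-γ)) * ∫ ω, ‖w t ω - wtil t ω‖^2 ∂μ
            + (1+1/lam) * (Real.sqrt (1-γ)+ρ)^2 * (α t)^2 * M := hstep1
        _ ≤ ((1+lam)*(1-γ)) * ((1+1/lam) * (Real.sqrt (1-γ)+ρ)^2 * M *
              ∑ i ∈ range t, ((1+lam)*(1-γ))^i * (α (t-1-i))^2)
            + (1+1/lam) * (Real.sqrt (1-γ)+ρ)^2 * (α t)^2 * M := by linarith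
        _ = (1+1/lam) * (Real.sqrt (1-γ)+ρ)^2 * M *
            ((α t)^2 + ((1+lam)*(1-γ)) *
              ∑ i ∈ range t, ((1+lam)*(1-γ))^i * (α (t-1-i))^2) := by ring
        _ = (1+1/lam) * (Real.sqrt (1-γ)+ρ)^2 * M *
            ∑ i ∈ range (t+1), ((1+lam)*(1-γ))^i * (α (t+1-1-i))^2 := by rw [hT]
  -- conclusion
  intro t ht
  have h1γ : (1-γ) ≠ 0 := ne_of_gt hγ''
  have hαne : α t ≠ 0 := (hα t).ne'
  have hSle : ∑ i ∈ range t, ((1+lam)*(1-γ))^i * (α (t-1-i))^2 ≤ D * α t / (1+lam) := by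
    have h0 := hstep t ht
    have heq : ∑ i ∈ Icc 1 t, ((1+lam)*(1-γ))^i * (α (t-i))^2 / α t
        = ((1+lam)*(1-γ)) / α t *
          ∑ i ∈ range t, ((1+lam)*(1-γ))^i * (α (t-1-i))^2 := by
      rw [← Finset.Ico_add_one_right_eq_Icc, Finset.sum_Ico_eq_sum_range, Finset.mul_sum]
      refine Finset.sum_congr rfl fun i _ => ?_
      have hidx : t - (1+i) = t - 1 - i := by omega
      rw [hidx, pow_add, pow_one]
      ring
    rw [heq] at h0
    have hfold : (1/(1-γ)) * (((1+lam)*(1-γ)) / α t *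
        ∑ i ∈ range t, ((1+lam)*(1-γ))^i * (α (t-1-i))^2)
        = (1+lam) * (∑ i ∈ range t, ((1+lam)*(1-γ))^i * (α (t-1-i))^2) / α t := by
      field_simp
    rw [hfold] at h0
    rw [le_div_iff₀ hlam1]
    rw [div_le_iff₀ (hα t)] at h0
    nlinarith [h0]
  have hB0 : (0:ℝ) ≤ (1+1/lam) * (Real.sqrt (1-γ)+ρ)^2 * M :=
    mul_nonneg (mul_nonneg h1l (sq_nonneg _)) hM0
  have hlamne : lam ≠ 0 := hlam.ne'
  have hlam1ne : (1+lam) ≠ 0 := hlam1.ne'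
  calc ∫ ω, ‖w t ω - wtil t ω‖^2 ∂μ
      ≤ (1+1/lam) * (Real.sqrt (1-γ)+ρ)^2 * M *
        ∑ i ∈ range t, ((1+lam)*(1-γ))^i * (α (t-1-i))^2 := hmain t
    _ ≤ (1+1/lam) * (Real.sqrt (1-γ)+ρ)^2 * M * (D * α t / (1+lam)) :=
        mul_le_mul_of_nonneg_left hSle hB0
    _ = (M / lam) * (Real.sqrt (1-γ) + ρ)^2 * α t * D :=
        aux_calc_bidir hlam
end

section
/- (One-step gap bound, unidirectional.) Suppose the compressor C satisfies ‖C(x) − x‖₂² ≤ (1 − γ)‖x‖₂² for all x ∈ ℝ^d with γ ∈ (0,1), and suppose that at step t ≥ 1 the unidirectional iterates satisfy ‖C(Σ_{q=1}^N p_q a_t^q) − Σ_{q=1}^N p_q C(a_t^q)‖₂ ≤ ρ̂ ‖α_{t−1} Σ_{q=1}^N p_q g_{t−1}^q‖₂ for some ρ̂ > 0. Then ‖w_t − w̃_t‖₂ ≤ √(1 − γ) ‖w_{t−1} − w̃_{t−1}‖₂ + (√(1 − γ) + ρ̂) ‖w̃_t − w̃_{t−1}‖₂. -/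
open Finset

/-- one-step gap bound, unidirectional: if `C` is a `γ`-approximate compressor
and at step `t+1` the unidirectional gap assumption holds with constant `ρ̂`, then
`‖w_{t+1} − w̃_{t+1}‖ ≤ √(1−γ) ‖w_t − w̃_t‖ + (√(1−γ) + ρ̂) ‖w̃_{t+1} − w̃_t‖`. -/
theorem unidirectional_one_step_gap_bound
    {d N : ℕ} (hd : 1 ≤ d) (hN : 1 ≤ N)
    (p : Fin N → ℝ) (α : ℕ → ℝ)
    (C : EuclideanSpace ℝ (Fin d) → EuclideanSpace ℝ (Fin d))
    (g : ℕ → Fin N → EuclideanSpace ℝ (Fin d))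
    (w₀ : EuclideanSpace ℝ (Fin d))
    (a ε : ℕ → Fin N → EuclideanSpace ℝ (Fin d))
    (w wtil : ℕ → EuclideanSpace ℝ (Fin d))
    (hε0 : ∀ q, ε 0 q = 0) (hw0 : w 0 = w₀)
    (ha : ∀ s q, a (s + 1) q = ε s q + α s • g s q)
    (hε : ∀ s q, ε (s + 1) q = a (s + 1) q - C (a (s + 1) q))
    (hw : ∀ s, w (s + 1) = w s - ∑ q, p q • C (a (s + 1) q))
    (hwtil : ∀ s, wtil s = w s - ∑ q, p q • ε s q)
    {γ : ℝ} (hγ0 : 0 < γ) (hγ1 : γ < 1)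
    (hC : ∀ x, ‖C x - x‖ ^ 2 ≤ (1 - γ) * ‖x‖ ^ 2)
    {ρhat : ℝ} (hρhat : 0 < ρhat) (t : ℕ)
    (hgap : ‖C (∑ q, p q • a (t + 1) q) - ∑ q, p q • C (a (t + 1) q)‖ ≤
        ρhat * ‖α t • ∑ q, p q • g t q‖) :
    ‖w (t + 1) - wtil (t + 1)‖ ≤
      Real.sqrt (1 - γ) * ‖w t - wtil t‖ +
        (Real.sqrt (1 - γ) + ρhat) * ‖wtil (t + 1) - wtil t‖ := by

  set A : EuclideanSpace ℝ (Fin d) := ∑ q, p q • a (t + 1) q with hAdef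
  set G : EuclideanSpace ℝ (Fin d) := α t • ∑ q, p q • g t q with hGdef
  have hEt : w t - wtil t = ∑ q, p q • ε t q := by
    rw [hwtil]; abel
  have hA : A = (w t - wtil t) + G := by
    rw [hEt, hAdef, hGdef, Finset.smul_sum, ← Finset.sum_add_distrib]
    refine Finset.sum_congr rfl fun q _ => ?_
    rw [ha, smul_add, smul_comm]
  have hSC : (∑ q, p q • ε (t + 1) q) = A - ∑ q, p q • C (a (t + 1) q) := by
    rw [hAdef, ← Finset.sum_sub_distrib]
    refine Finset.sum_congr rfl fun q _ => ?_
    rw [hε, smul_sub]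
  have hE1 : w (t + 1) - wtil (t + 1) = A - ∑ q, p q • C (a (t + 1) q) := by
    rw [hwtil, ← hSC]; abel
  have hstep : wtil (t + 1) - wtil t = -G := by
    rw [hwtil (t + 1), hSC, hw, hA]; abel
  have hnormG : ‖wtil (t + 1) - wtil t‖ = ‖G‖ := by rw [hstep, norm_neg]
  have hs : (0:ℝ) ≤ 1 - γ := by linarith
  have hCA : ‖C A - A‖ ≤ Real.sqrt (1 - γ) * ‖A‖ := by
    have h := Real.sqrt_le_sqrt (hC A)
    rwa [Real.sqrt_sq (norm_nonneg _), Real.sqrt_mul hs,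
      Real.sqrt_sq (norm_nonneg _)] at h
  have hAn : ‖A‖ ≤ ‖w t - wtil t‖ + ‖G‖ := by
    rw [hA]; exact norm_add_le _ _
  have htri : ‖A - ∑ q, p q • C (a (t + 1) q)‖ ≤
      ‖A - C A‖ + ‖C A - ∑ q, p q • C (a (t + 1) q)‖ := by
    have := norm_add_le (A - C A) (C A - ∑ q, p q • C (a (t + 1) q))
    simpa using this
  have hsq : (0:ℝ) ≤ Real.sqrt (1 - γ) := Real.sqrt_nonneg _
  rw [hE1, hnormG]
  have h1 : ‖A - C A‖ ≤ Real.sqrt (1 - γ) * (‖w t - wtil t‖ + ‖G‖) := by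
    rw [norm_sub_rev]
    exact hCA.trans (by nlinarith)
  have h2 : ‖C A - ∑ q, p q • C (a (t + 1) q)‖ ≤ ρhat * ‖G‖ := hgap
  nlinarith
end

section
/- (Remark after Theorem 1: non-convex convergence of unidirectional top-K SGD.) Let F : ℝ^d → ℝ be differentiable with L-Lipschitz gradient (L > 0) and bounded below by F*. Let (Ω, ℱ, ℙ) be a probability space with a filtration (ℱ_t)_{t≥0}, and let the stochastic gradients g_t^q be random vectors such that the unidirectional compressed SGD iterates w_t, w̃_t (defined pathwise) are ℱ_t-measurable. Assume: (i) the compressor C satisfies ‖C(x) − x‖₂² ≤ (1 − γ)‖x‖₂² for all x ∈ ℝ^d with γ ∈ (0,1); (ii) almost surely, for every t ≥ 1, ‖C(Σ_q p_q a_t^q) − Σ_q p_q C(a_t^q)‖₂ ≤ ρ̂ ‖α_{t−1} Σ_q p_q g_{t−1}^q‖₂ for some ρ̂ > 0; (iii) E[Σ_{q=1}^N p_q g_t^q | ℱ_t] = ∇F(w_t) almost surely and E[‖Σ_{q=1}^N p_q g_t^q‖₂²] ≤ M for all t ≥ 0; (iv) the step sizes satisfy α_t > 0 and, for some λ > 0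 and D > 0, (1/(1 − γ)) Σ_{i=1}^t ((1 + λ)(1 − γ))^i α_{t−i}²/α_t ≤ D for every t ≥ 1. Then for every T ≥ 0, (1/Σ_{t=0}^T α_t) Σ_{t=0}^T α_t E[‖∇F(w_t)‖₂²] ≤ (2/Σ_{t=0}^T α_t)(F(w_0) − F*) + (L M + L² M D (√(1 − γ) + ρ̂)²/λ) · (Σ_{t=0}^T α_t²)/(Σ_{t=0}^T α_t). -/
open Finset MeasureTheory

open scoped RealInnerProductSpace

section SGDAux

theorem sgd_descent {E : Type*} [NormedAddCommGroup E] [InnerProductSpace ℝ E] [CompleteSpace E]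
    (F : E → ℝ) {L : ℝ} (hL : 0 ≤ L) (hFdiff : Differentiable ℝ F)
    (hFlip : ∀ x y, ‖gradient F x - gradient F y‖ ≤ L * ‖x - y‖) (x y : E) :
    F y ≤ F x + ⟪gradient F x, y - x⟫ + L / 2 * ‖y - x‖ ^ 2 := by
  set u := y - x with hu
  have hgradcont : Continuous (gradient F) := by
    have : LipschitzWith (Real.toNNReal L) (gradient F) := by
      apply LipschitzWith.of_dist_le_mul
      intro a b
      rw [dist_eq_norm, dist_eq_norm, Real.coe_toNNReal _ hL]
      exact hFlip a b
    exact this.continuous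
  have hline : ∀ s : ℝ, HasDerivAt (fun s : ℝ => x + s • u) u s := by
    intro s
    simpa using ((hasDerivAt_id s).smul_const u).const_add x
  have hφ : ∀ s : ℝ, HasDerivAt (fun s : ℝ => F (x + s • u))
      ⟪gradient F (x + s • u), u⟫ s := by
    intro s
    have h1 := (hFdiff (x + s • u)).hasGradientAt
    rw [hasGradientAt_iff_hasFDerivAt] at h1
    have := h1.comp_hasDerivAt s (hline s)
    exact this
  have hcont : Continuous fun s : ℝ => ⟪gradient F (x + s • u), u⟫ := by
    exact (hgradcont.comp (by continuity)).inner continuous_const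
  have hFTC : F (x + (1:ℝ) • u) - F (x + (0:ℝ) • u)
      = ∫ s in (0:ℝ)..1, ⟪gradient F (x + s • u), u⟫ := by
    rw [intervalIntegral.integral_eq_sub_of_hasDerivAt (fun s _ => hφ s)
      (hcont.intervalIntegrable 0 1)]
  have hbound : ∫ s in (0:ℝ)..1, ⟪gradient F (x + s • u), u⟫
      ≤ ∫ s in (0:ℝ)..1, (⟪gradient F x, u⟫ + L * ‖u‖ ^ 2 * s) := by
    have hcont2 : Continuous fun s : ℝ => ⟪gradient F x, u⟫ + L * ‖u‖ ^ 2 * s := by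
      continuity
    apply intervalIntegral.integral_mono_on (by norm_num)
      (hcont.intervalIntegrable 0 1) (hcont2.intervalIntegrable 0 1)
    intro s hs
    have h1 : ⟪gradient F (x + s • u), u⟫ - ⟪gradient F x, u⟫
        = ⟪gradient F (x + s • u) - gradient F x, u⟫ := by
      rw [inner_sub_left]
    have h2 : ⟪gradient F (x + s • u) - gradient F x, u⟫
        ≤ ‖gradient F (x + s • u) - gradient F x‖ * ‖u‖ :=
      real_inner_le_norm _ _
    have h3 : ‖gradient F (x + s • u) - gradient F x‖ ≤ L * (s * ‖u‖) := by
      have := hFlip (x + s • u) x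
      simpa [norm_smul, abs_of_nonneg hs.1] using this
    have h4 : ‖gradient F (x + s • u) - gradient F x‖ * ‖u‖ ≤ L * (s * ‖u‖) * ‖u‖ :=
      mul_le_mul_of_nonneg_right h3 (norm_nonneg _)
    nlinarith [norm_nonneg u]
  have hval : ∫ s in (0:ℝ)..1, (⟪gradient F x, u⟫ + L * ‖u‖ ^ 2 * s)
      = ⟪gradient F x, u⟫ + L / 2 * ‖u‖ ^ 2 := by
    have hc2 : Continuous fun s : ℝ => L * ‖u‖ ^ 2 * s := by continuity
    rw [intervalIntegral.integral_add (intervalIntegrable_const)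
      (hc2.intervalIntegrable 0 1)]
    have h5 : ∫ s in (0:ℝ)..1, L * ‖u‖ ^ 2 * s = L * ‖u‖ ^ 2 * (1 / 2) := by
      rw [intervalIntegral.integral_const_mul]
      simp [integral_id]
    rw [h5]
    simp
    ring
  have : F y - F x ≤ ⟪gradient F x, u⟫ + L / 2 * ‖u‖ ^ 2 := by
    have hxy : x + (1:ℝ) • u = y := by rw [hu]; simp
    have hx0 : x + (0:ℝ) • u = x := by simp
    rw [hxy, hx0] at hFTC
    rw [hFTC]
    exact hbound.trans_eq hval
  linarith

theorem sgd_condExp_clm {Ω : Type*} {m : MeasurableSpace Ω} {m0 : MeasurableSpace Ω}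
    {μ : Measure Ω} [IsFiniteMeasure μ] (hm : m ≤ m0)
    {E F : Type*} [NormedAddCommGroup E] [NormedSpace ℝ E] [CompleteSpace E]
    [NormedAddCommGroup F] [NormedSpace ℝ F] [CompleteSpace F]
    (T : E →L[ℝ] F) {f : Ω → E} (hf : Integrable f μ) :
    (fun ω => T ((μ[f|m]) ω)) =ᵐ[μ] μ[fun ω => T (f ω)|m] := by
  haveI : SigmaFinite (μ.trim hm) := by infer_instance
  have hint1 : Integrable (fun ω => T ((μ[f|m]) ω)) μ := by
    have := T.integrable_comp (integrable_condExp (f := f) (m := m) (μ := μ))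
    simpa [Function.comp] using this
  have hint2 : Integrable (fun ω => T (f ω)) μ := by
    have := T.integrable_comp hf
    simpa [Function.comp] using this
  have hsm : StronglyMeasurable[m] (fun ω => T ((μ[f|m]) ω)) :=
    T.continuous.comp_stronglyMeasurable stronglyMeasurable_condExp
  refine ae_eq_condExp_of_forall_setIntegral_eq hm hint2
    (fun s _ _ => hint1.integrableOn) (fun s hs hμs => ?_) hsm.aestronglyMeasurable
  have e1 : ∫ x in s, T ((μ[f|m]) x) ∂μ = T (∫ x in s, (μ[f|m]) x ∂μ) :=
    T.integral_comp_comm integrable_condExp.integrableOn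
  have e2 : ∫ x in s, T (f x) ∂μ = T (∫ x in s, f x ∂μ) :=
    T.integral_comp_comm hf.integrableOn
  rw [e1, e2, setIntegral_condExp hm hf hs]

theorem sgd_integrable_mul {Ω : Type*} {m0 : MeasurableSpace Ω} {μ : Measure Ω}
    {f g : Ω → ℝ} (hf : MemLp f 2 μ) (hg : MemLp g 2 μ) :
    Integrable (fun ω => f ω * g ω) μ := by
  refine Integrable.mono' ((hf.integrable_sq.add hg.integrable_sq).div_const 2)
    (hf.1.mul hg.1) (Filter.Eventually.of_forall fun ω => ?_)
  rw [Real.norm_eq_abs, abs_mul]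
  simp only [Pi.add_apply]
  nlinarith [two_mul_le_add_sq (|f ω|) (|g ω|), sq_abs (f ω), sq_abs (g ω),
    abs_nonneg (f ω), abs_nonneg (g ω)]

theorem sgd_integrable_inner {Ω : Type*} {m0 : MeasurableSpace Ω} {μ : Measure Ω}
    {E : Type*} [NormedAddCommGroup E] [InnerProductSpace ℝ E]
    {f g : Ω → E} (hf : MemLp f 2 μ) (hg : MemLp g 2 μ) :
    Integrable (fun ω => ⟪f ω, g ω⟫) μ := by
  refine Integrable.mono' ((hf.norm.integrable_sq.add hg.norm.integrable_sq).div_const 2)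
    (hf.1.inner hg.1) (Filter.Eventually.of_forall fun ω => ?_)
  have h1 : ‖⟪f ω, g ω⟫‖ ≤ ‖f ω‖ * ‖g ω‖ := norm_inner_le_norm _ _
  simp only [Pi.add_apply]
  nlinarith [two_mul_le_add_sq (‖f ω‖) (‖g ω‖), norm_nonneg (f ω), norm_nonneg (g ω)]

theorem sgd_integral_inner_condExp {Ω : Type*} {m : MeasurableSpace Ω}
    {m0 : MeasurableSpace Ω} {μ : Measure Ω}
    [IsProbabilityMeasure μ] (hm : m ≤ m0) {d : ℕ}
    {X h G : Ω → EuclideanSpace ℝ (Fin d)}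
    (hXm : StronglyMeasurable[m] X) (hX : MemLp X 2 μ) (hh : MemLp h 2 μ)
    (hG : MemLp G 2 μ) (hcond : μ[h|m] =ᵐ[μ] G) :
    ∫ ω, ⟪X ω, h ω⟫ ∂μ = ∫ ω, ⟪X ω, G ω⟫ ∂μ := by
  have hhi : Integrable h μ := hh.integrable one_le_two
  have hXi : ∀ i, MemLp (fun ω => X ω i) 2 μ := fun i => by
    exact
      (EuclideanSpace.proj (𝕜 := ℝ) i).comp_memLp' hX
  have hhimem : ∀ i, MemLp (fun ω => h ω i) 2 μ := fun i => by
    exact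
      (EuclideanSpace.proj (𝕜 := ℝ) i).comp_memLp' hh
  have hGimem : ∀ i, MemLp (fun ω => G ω i) 2 μ := fun i => by
    exact
      (EuclideanSpace.proj (𝕜 := ℝ) i).comp_memLp' hG
  have hXim : ∀ i, StronglyMeasurable[m] (fun ω => X ω i) := fun i => by
    have := ((EuclideanSpace.proj (𝕜 := ℝ) i).continuous).comp_stronglyMeasurable hXm
    simpa [Function.comp, PiLp.proj_apply] using this
  have hkey : ∀ i, ∫ ω, X ω i * h ω i ∂μ = ∫ ω, X ω i * G ω i ∂μ := by
    intro i
    have hcondi : (μ[fun ω => h ω i|m]) =ᵐ[μ] fun ω => G ω i := by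
      have h1 := (sgd_condExp_clm hm (EuclideanSpace.proj (𝕜 := ℝ) i) hhi).symm
      have h2 : (fun ω => (EuclideanSpace.proj (𝕜 := ℝ) i) ((μ[h|m]) ω)) =ᵐ[μ]
          fun ω => G ω i := by
        filter_upwards [hcond] with ω hω
        simp [hω, PiLp.proj_apply]
      have h3 : (μ[fun ω => (EuclideanSpace.proj (𝕜 := ℝ) i) (h ω)|m]) =
          μ[fun ω => h ω i|m] := by
        congr 1
      exact (h3 ▸ h1).trans h2
    have hpull : μ[(fun ω => X ω i) * (fun ω => h ω i)|m] =ᵐ[μ]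
        (fun ω => X ω i) * μ[fun ω => h ω i|m] :=
      condExp_mul_of_stronglyMeasurable_left (hXim i)
        (by exact sgd_integrable_mul (hXi i) (hhimem i))
        ((hhimem i).integrable one_le_two)
    have hintmul : Integrable ((fun ω => X ω i) * (fun ω => h ω i)) μ := by
      exact sgd_integrable_mul (hXi i) (hhimem i)
    calc ∫ ω, X ω i * h ω i ∂μ
        = ∫ ω, ((fun ω => X ω i) * fun ω => h ω i) ω ∂μ := rfl
      _ = ∫ ω, (μ[(fun ω => X ω i) * (fun ω => h ω i)|m]) ω ∂μ :=
          (integral_condExp hm).symm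
      _ = ∫ ω, X ω i * G ω i ∂μ := by
          refine integral_congr_ae ?_
          filter_upwards [hpull, hcondi] with ω h1 h2
          rw [h1]
          simp [h2]
  have hexp : ∀ (u v : Ω → EuclideanSpace ℝ (Fin d)), (∀ i, MemLp (fun ω => u ω i) 2 μ) →
      (∀ i, MemLp (fun ω => v ω i) 2 μ) →
      ∫ ω, ⟪u ω, v ω⟫ ∂μ = ∑ i, ∫ ω, u ω i * v ω i ∂μ := by
    intro u v hu hv
    have : ∀ ω, ⟪u ω, v ω⟫ = ∑ i, u ω i * v ω i := by
      intro ω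
      simp [PiLp.inner_apply, RCLike.inner_apply, conj_trivial, mul_comm]
    simp_rw [this]
    exact integral_finset_sum _ (fun i _ => sgd_integrable_mul (hu i) (hv i))
  rw [hexp X h hXi hhimem, hexp X G hXi hGimem]
  exact Finset.sum_congr rfl (fun i _ => hkey i)

end SGDAux

set_option maxHeartbeats 2000000 in
/-- Remark after Theorem 1: non-convex convergence of unidirectional
top-K SGD. -/
theorem unidirectional_topK_sgd_convergence
    {d N : ℕ} (hd : 1 ≤ d) (hN : 1 ≤ N)
    {Ω : Type*} {m : MeasurableSpace Ω} (μ : Measure Ω) [IsProbabilityMeasure μ]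
    (ℱ : Filtration ℕ m)
    (p : Fin N → ℝ) (α : ℕ → ℝ)
    (C : EuclideanSpace ℝ (Fin d) → EuclideanSpace ℝ (Fin d))
    (g : ℕ → Fin N → Ω → EuclideanSpace ℝ (Fin d))
    (w₀ : EuclideanSpace ℝ (Fin d))
    (a ε : ℕ → Fin N → Ω → EuclideanSpace ℝ (Fin d))
    (w wtil : ℕ → Ω → EuclideanSpace ℝ (Fin d))
    -- the objective function
    (F : EuclideanSpace ℝ (Fin d) → ℝ) {L Fstar : ℝ} (hL : 0 < L)
    (hFdiff : Differentiable ℝ F)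
    (hFlip : ∀ x y, ‖gradient F x - gradient F y‖ ≤ L * ‖x - y‖)
    (hFstar : ∀ x, Fstar ≤ F x)
    -- pathwise definition of the iterates
    (hε0 : ∀ q ω, ε 0 q ω = 0) (hw0 : ∀ ω, w 0 ω = w₀)
    (ha : ∀ s q ω, a (s + 1) q ω = ε s q ω + α s • g s q ω)
    (hε : ∀ s q ω, ε (s + 1) q ω = a (s + 1) q ω - C (a (s + 1) q ω))
    (hw : ∀ s ω, w (s + 1) ω = w s ω - ∑ q, p q • C (a (s + 1) q ω))
    (hwtil : ∀ s ω, wtil s ω = w s ω - ∑ q, p q • ε s q ω)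
    -- measurability and square-integrability of the iterates
    (hadapt_w : ∀ s, StronglyMeasurable[ℱ s] (w s))
    (hadapt_wtil : ∀ s, StronglyMeasurable[ℱ s] (wtil s))
    (hmeas_g : ∀ s q, Measurable (g s q))
    (hsq_w : ∀ s, MemLp (w s) 2 μ) (hsq_wtil : ∀ s, MemLp (wtil s) 2 μ)
    (hsq_g : ∀ s q, MemLp (g s q) 2 μ)
    (hint_F : ∀ s, Integrable (fun ω => F (wtil s ω)) μ)
    (hint_grad : ∀ s, Integrable (fun ω => ‖gradient F (w s ω)‖ ^ 2) μ)
    -- (i) γ-approximate compressor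
    {γ : ℝ} (hγ0 : 0 < γ) (hγ1 : γ < 1)
    (hC : ∀ x, ‖C x - x‖ ^ 2 ≤ (1 - γ) * ‖x‖ ^ 2)
    -- (ii) a.s. gap assumption
    {ρhat : ℝ} (hρhat : 0 < ρhat)
    (hgap : ∀ᵐ ω ∂μ, ∀ s, ‖C (∑ q, p q • a (s + 1) q ω) -
        ∑ q, p q • C (a (s + 1) q ω)‖ ≤ ρhat * ‖α s • ∑ q, p q • g s q ω‖)
    -- (iii) unbiasedness and second-moment bound
    {M : ℝ}
    (hunbiased : ∀ s,
      μ[fun ω => ∑ q, p q • g s q ω | ℱ s] =ᵐ[μ] fun ω => gradient F (w s ω))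
    (hM : ∀ s, ∫ ω, ‖∑ q, p q • g s q ω‖ ^ 2 ∂μ ≤ M)
    -- (iv) step-size condition
    (hα : ∀ s, 0 < α s) {lam D : ℝ} (hlam : 0 < lam) (hD : 0 < D)
    (hstep : ∀ t : ℕ, 1 ≤ t →
      (1 / (1 - γ)) * ∑ i ∈ Icc 1 t, ((1 + lam) * (1 - γ)) ^ i * (α (t - i)) ^ 2 / α t ≤ D) :
    ∀ T : ℕ,
      (1 / ∑ t ∈ range (T + 1), α t) *
          ∑ t ∈ range (T + 1), α t * ∫ ω, ‖gradient F (w t ω)‖ ^ 2 ∂μ ≤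
        (2 / ∑ t ∈ range (T + 1), α t) * (F w₀ - Fstar) +
          (L * M + L ^ 2 * M * D * (Real.sqrt (1 - γ) + ρhat) ^ 2 / lam) *
            ((∑ t ∈ range (T + 1), (α t) ^ 2) / ∑ t ∈ range (T + 1), α t) := by
    -- basic constants
  have h1γ : (0:ℝ) ≤ 1 - γ := by linarith
  have h1γ' : (0:ℝ) < 1 - γ := by linarith
  have hsq1γ : Real.sqrt (1 - γ) ^ 2 = 1 - γ := Real.sq_sqrt h1γ
  set r : ℝ := (1 + lam) * (1 - γ) with hr
  have hrpos : 0 < r := by positivity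
  set K : ℝ := (1 + 1/lam) * (Real.sqrt (1 - γ) + ρhat) ^ 2 with hK
  have hKpos : 0 < K := by positivity
  have hM0 : 0 ≤ M := le_trans (integral_nonneg fun ω => by positivity) (hM 0)
  set c2 : ℝ := L ^ 2 * M * D * (Real.sqrt (1 - γ) + ρhat) ^ 2 / lam with hc2
  have hc20 : 0 ≤ c2 := by
    apply div_nonneg _ hlam.le
    have : (0:ℝ) ≤ L ^ 2 * M * D := by positivity
    positivity
  -- membership facts
  have hG2 : ∀ t, MemLp (fun ω => ∑ q, p q • g t q ω) 2 μ := by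
    intro t
    apply memLp_finset_sum
    intro q _
    exact (hsq_g t q).const_smul (p q)
  have he_eq : ∀ t ω, (∑ q, p q • ε t q ω) = w t ω - wtil t ω := by
    intro t ω; rw [hwtil t ω]; abel
  have he2 : ∀ t, MemLp (fun ω => ∑ q, p q • ε t q ω) 2 μ := by
    intro t
    have h1 := (hsq_w t).sub (hsq_wtil t)
    have h2 : (fun ω => w t ω - wtil t ω) = fun ω => ∑ q, p q • ε t q ω := by
      funext ω; rw [he_eq]
    have h1' : MemLp (fun ω => w t ω - wtil t ω) 2 μ := h1
    rwa [h2] at h1'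
  have hgradlip : LipschitzWith (Real.toNNReal L) (gradient F) := by
    apply LipschitzWith.of_dist_le_mul
    intro x y
    rw [dist_eq_norm, dist_eq_norm, Real.coe_toNNReal _ hL.le]
    exact hFlip x y
  have hgradcont : Continuous (gradient F) := hgradlip.continuous
  have hgradmem : ∀ u : Ω → EuclideanSpace ℝ (Fin d), MemLp u 2 μ →
      MemLp (fun ω => gradient F (u ω)) 2 μ := by
    intro u hu
    have hb : MemLp (fun ω => L * ‖u ω‖ + ‖gradient F 0‖) 2 μ :=
      (hu.norm.const_mul L).add (memLp_const _)
    refine hb.of_le (hgradcont.comp_aestronglyMeasurable hu.1) ?_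
    refine Filter.Eventually.of_forall fun ω => ?_
    have h1 := hFlip (u ω) 0
    rw [sub_zero] at h1
    have h2 := norm_sub_norm_le (gradient F (u ω)) (gradient F 0)
    have h3 : ‖gradient F (u ω)‖ ≤ L * ‖u ω‖ + ‖gradient F 0‖ := by linarith
    exact h3.trans (le_abs_self _)
  -- pointwise structural identities
  have hsum_a : ∀ t ω, (∑ q, p q • a (t+1) q ω)
      = (∑ q, p q • ε t q ω) + α t • ∑ q, p q • g t q ω := by
    intro t ω
    simp only [ha, smul_add]
    rw [Finset.sum_add_distrib, Finset.smul_sum]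
    congr 1
    exact Finset.sum_congr rfl fun q _ => smul_comm _ _ _
  have hCsplit : ∀ t ω, (∑ q, p q • ε (t+1) q ω)
      = (∑ q, p q • a (t+1) q ω) - ∑ q, p q • C (a (t+1) q ω) := by
    intro t ω
    simp only [hε, smul_sub]
    rw [Finset.sum_sub_distrib]
  have hwtil_succ : ∀ t ω, wtil (t+1) ω = wtil t ω - α t • ∑ q, p q • g t q ω := by
    intro t ω
    rw [hwtil (t+1) ω, hw t ω, hCsplit t ω, hsum_a t ω, hwtil t ω]
    abel
  have hwtil0 : ∀ ω, wtil 0 ω = w₀ := by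
    intro ω
    rw [hwtil 0 ω, hw0 ω]
    simp [hε0]
  -- compressor contraction in norm
  have hC' : ∀ x, ‖C x - x‖ ≤ Real.sqrt (1 - γ) * ‖x‖ := by
    intro x
    have h1 : ‖C x - x‖ = Real.sqrt (‖C x - x‖ ^ 2) := (Real.sqrt_sq (norm_nonneg _)).symm
    rw [h1]
    calc Real.sqrt (‖C x - x‖ ^ 2) ≤ Real.sqrt ((1 - γ) * ‖x‖ ^ 2) :=
          Real.sqrt_le_sqrt (hC x)
      _ = Real.sqrt (1 - γ) * ‖x‖ := by
          rw [Real.sqrt_mul h1γ, Real.sqrt_sq (norm_nonneg _)]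
  -- a.e. recursion for the squared error
  have herec : ∀ᵐ ω ∂μ, ∀ t, ‖∑ q, p q • ε (t+1) q ω‖ ^ 2
      ≤ r * ‖∑ q, p q • ε t q ω‖ ^ 2 + (K * α t ^ 2) * ‖∑ q, p q • g t q ω‖ ^ 2 := by
    filter_upwards [hgap] with ω hω
    intro t
    set S := ∑ q, p q • a (t+1) q ω with hS
    set A := ‖∑ q, p q • ε t q ω‖ with hA
    set B := ‖α t • ∑ q, p q • g t q ω‖ with hB
    have hA0 : 0 ≤ A := norm_nonneg _
    have hB0 : 0 ≤ B := norm_nonneg _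
    have hnorm : ‖∑ q, p q • ε (t+1) q ω‖
        ≤ Real.sqrt (1 - γ) * A + (Real.sqrt (1 - γ) + ρhat) * B := by
      have hsplit : (∑ q, p q • ε (t+1) q ω)
          = (S - C S) + (C S - ∑ q, p q • C (a (t+1) q ω)) := by
        rw [hCsplit t ω, ← hS]; abel
      rw [hsplit]
      refine (norm_add_le _ _).trans ?_
      have t1 : ‖S - C S‖ ≤ Real.sqrt (1 - γ) * ‖S‖ := by
        rw [norm_sub_rev]; exact hC' S
      have t2 : ‖C S - ∑ q, p q • C (a (t+1) q ω)‖ ≤ ρhat * B := hω t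
      have t3 : ‖S‖ ≤ A + B := by
        rw [hS, hsum_a t ω]; exact norm_add_le _ _
      have t4 : Real.sqrt (1 - γ) * ‖S‖ ≤ Real.sqrt (1 - γ) * (A + B) :=
        mul_le_mul_of_nonneg_left t3 (Real.sqrt_nonneg _)
      nlinarith [Real.sqrt_nonneg (1 - γ)]
    have hsq : ‖∑ q, p q • ε (t+1) q ω‖ ^ 2
        ≤ (Real.sqrt (1 - γ) * A + (Real.sqrt (1 - γ) + ρhat) * B) ^ 2 := by
      have h0 : 0 ≤ Real.sqrt (1 - γ) * A + (Real.sqrt (1 - γ) + ρhat) * B := by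
        have := Real.sqrt_nonneg (1 - γ)
        nlinarith
      nlinarith [norm_nonneg (∑ q, p q • ε (t+1) q ω), hnorm]
    have hyoung : (Real.sqrt (1 - γ) * A + (Real.sqrt (1 - γ) + ρhat) * B) ^ 2
        ≤ (1 + lam) * (Real.sqrt (1 - γ) * A) ^ 2
          + (1 + 1/lam) * ((Real.sqrt (1 - γ) + ρhat) * B) ^ 2 := by
      set x := Real.sqrt (1 - γ) * A
      set y := (Real.sqrt (1 - γ) + ρhat) * B
      have hinv : lam * (1/lam) = 1 := by field_simp
      nlinarith [sq_nonneg (lam * x - y), mul_pos hlam hlam, sq_nonneg x, sq_nonneg y]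
    have hB2 : B ^ 2 = α t ^ 2 * ‖∑ q, p q • g t q ω‖ ^ 2 := by
      rw [hB, norm_smul, mul_pow, Real.norm_eq_abs, sq_abs]
    calc ‖∑ q, p q • ε (t+1) q ω‖ ^ 2
        ≤ (1 + lam) * (Real.sqrt (1 - γ) * A) ^ 2
          + (1 + 1/lam) * ((Real.sqrt (1 - γ) + ρhat) * B) ^ 2 := hsq.trans hyoung
      _ = r * A ^ 2 + (K * α t ^ 2) * ‖∑ q, p q • g t q ω‖ ^ 2 := by
          rw [mul_pow, mul_pow, hsq1γ, hB2, hr, hK]; ring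
  -- integrated recursion
  have hGsq_int : ∀ t, Integrable (fun ω => ‖∑ q, p q • g t q ω‖ ^ 2) μ :=
    fun t => (hG2 t).norm.integrable_sq
  have hesq_int : ∀ t, Integrable (fun ω => ‖∑ q, p q • ε t q ω‖ ^ 2) μ :=
    fun t => (he2 t).norm.integrable_sq
  have hErec : ∀ t, ∫ ω, ‖∑ q, p q • ε (t+1) q ω‖ ^ 2 ∂μ
      ≤ r * ∫ ω, ‖∑ q, p q • ε t q ω‖ ^ 2 ∂μ + (K * α t ^ 2) * M := by
    intro t
    have hmono := integral_mono_ae (hesq_int (t+1))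
      (((hesq_int t).const_mul r).add ((hGsq_int t).const_mul (K * α t ^ 2)))
      (herec.mono fun ω hω => hω t)
    simp only [Pi.add_apply] at hmono
    rw [integral_add ((hesq_int t).const_mul r) ((hGsq_int t).const_mul (K * α t ^ 2)),
      integral_const_mul, integral_const_mul] at hmono
    refine hmono.trans ?_
    have := mul_le_mul_of_nonneg_left (hM t) (by positivity : (0:ℝ) ≤ K * α t ^ 2)
    linarith
  have hE0 : ∫ ω, ‖∑ q, p q • ε 0 q ω‖ ^ 2 ∂μ = 0 := by
    simp [hε0]
  -- the weighted-sum bound by induction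
  set Sf : ℕ → ℝ := fun t => ∑ j ∈ range t, r ^ j * (α (t - 1 - j)) ^ 2 with hSf
  have hSnonneg : ∀ t, 0 ≤ Sf t := by
    intro t
    apply Finset.sum_nonneg
    intro j _
    positivity
  have hSsucc : ∀ t, Sf (t+1) = α t ^ 2 + r * Sf t := by
    intro t
    have hLHS : Sf (t+1) = ∑ j ∈ range (t+1), r ^ j * (α (t + 1 - 1 - j)) ^ 2 := rfl
    have hRHS : Sf t = ∑ j ∈ range t, r ^ j * (α (t - 1 - j)) ^ 2 := rfl
    rw [hLHS, hRHS, Finset.sum_range_succ']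
    have h1 : ∀ j, r ^ (j+1) * (α (t + 1 - 1 - (j+1))) ^ 2
        = r * (r ^ j * (α (t - 1 - j)) ^ 2) := by
      intro j
      have hn : t + 1 - 1 - (j+1) = t - 1 - j := by omega
      rw [hn, pow_succ]; ring
    rw [Finset.sum_congr rfl fun j _ => h1 j, ← Finset.mul_sum]
    simp only [pow_zero, one_mul, Nat.add_sub_cancel, Nat.sub_zero]
    ring
  have hEbound : ∀ t, ∫ ω, ‖∑ q, p q • ε t q ω‖ ^ 2 ∂μ ≤ K * M * Sf t := by
    intro t
    induction t with
    | zero => rw [hE0]; simp [hSf]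
    | succ t ih =>
        calc ∫ ω, ‖∑ q, p q • ε (t+1) q ω‖ ^ 2 ∂μ
            ≤ r * ∫ ω, ‖∑ q, p q • ε t q ω‖ ^ 2 ∂μ + (K * α t ^ 2) * M := hErec t
          _ ≤ r * (K * M * Sf t) + (K * α t ^ 2) * M :=
              add_le_add_left (mul_le_mul_of_nonneg_left ih hrpos.le) _
          _ = K * M * Sf (t+1) := by rw [hSsucc t]; ring
  -- step-size condition gives the key bound
  have hkey2 : ∀ t, L ^ 2 * (α t * ∫ ω, ‖∑ q, p q • ε t q ω‖ ^ 2 ∂μ) ≤ c2 * α t ^ 2 := by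
    intro t
    rcases Nat.eq_zero_or_pos t with ht0 | ht1
    · subst ht0
      rw [hE0, mul_zero, mul_zero]
      positivity
    · have hIcc : ∑ i ∈ Icc 1 t, r ^ i * (α (t - i)) ^ 2 / α t = (r * Sf t) / α t := by
        rw [← Finset.sum_div]
        congr 1
        rw [← Finset.Ico_add_one_right_eq_Icc, Finset.sum_Ico_eq_sum_range]
        try simp only [Nat.add_sub_cancel]
        rw [Finset.mul_sum]
        apply Finset.sum_congr rfl
        intro j _
        have hn : t - (1 + j) = t - 1 - j := by omega
        rw [hn, pow_add, pow_one]
        ring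
      have hs1 := hstep t ht1
      rw [hIcc] at hs1
      -- from hs1 : (1/(1-γ)) * ((r * Sf t)/α t) ≤ D
      have hs2 : r * Sf t ≤ D * (1 - γ) * α t := by
        have hα' := hα t
        rw [div_mul_eq_mul_div, one_mul, div_div, div_le_iff₀ (by positivity)] at hs1
        linarith [hs1]
      have hs3 : Sf t ≤ D * (1 - γ) * α t / r :=
        (le_div_iff₀' hrpos).mpr hs2
      have hE := (hEbound t).trans
        (mul_le_mul_of_nonneg_left hs3 (by positivity : (0:ℝ) ≤ K * M))
      have h1l : (1:ℝ) + lam ≠ 0 := by positivity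
      have hKr : K * (1 - γ) / r = (Real.sqrt (1 - γ) + ρhat) ^ 2 / lam := by
        rw [hK, hr]
        field_simp
        ring
      have hfin : L ^ 2 * (α t * (K * M * (D * (1 - γ) * α t / r))) = c2 * α t ^ 2 := by
        have h' : L ^ 2 * (α t * (K * M * (D * (1 - γ) * α t / r)))
            = L ^ 2 * M * D * α t ^ 2 * (K * (1 - γ) / r) := by ring
        rw [h', hKr, hc2]
        ring
      calc L ^ 2 * (α t * ∫ ω, ‖∑ q, p q • ε t q ω‖ ^ 2 ∂μ)
          ≤ L ^ 2 * (α t * (K * M * (D * (1 - γ) * α t / r))) := by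
            apply mul_le_mul_of_nonneg_left _ (by positivity)
            exact mul_le_mul_of_nonneg_left hE (hα t).le
        _ = c2 * α t ^ 2 := hfin
  -- the per-step descent inequality, in expectation
  have hΦstep : ∀ t, α t * ∫ ω, ‖gradient F (w t ω)‖ ^ 2 ∂μ
      ≤ 2 * ((∫ ω, F (wtil t ω) ∂μ) - ∫ ω, F (wtil (t+1) ω) ∂μ)
        + L * M * α t ^ 2 + c2 * α t ^ 2 := by
    intro t
    have hgradwtil := hgradmem _ (hsq_wtil t)
    have hgradw := hgradmem _ (hsq_w t)
    have hinner_int : Integrable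
        (fun ω => ⟪gradient F (wtil t ω), ∑ q, p q • g t q ω⟫) μ :=
      sgd_integrable_inner hgradwtil (hG2 t)
    have hinner_int2 : Integrable
        (fun ω => ⟪gradient F (wtil t ω), gradient F (w t ω)⟫) μ :=
      sgd_integrable_inner hgradwtil hgradw
    -- descent pointwise
    have hdesc : ∀ ω, F (wtil (t+1) ω)
        ≤ F (wtil t ω) - α t * ⟪gradient F (wtil t ω), ∑ q, p q • g t q ω⟫
          + (L/2 * α t ^ 2) * ‖∑ q, p q • g t q ω‖ ^ 2 := by
      intro ω
      have h0 := sgd_descent F hL.le hFdiff hFlip (wtil t ω) (wtil (t+1) ω)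
      have hdiff : wtil (t+1) ω - wtil t ω = -(α t • ∑ q, p q • g t q ω) := by
        rw [hwtil_succ t ω]; abel
      rw [hdiff] at h0
      have h1 : ⟪gradient F (wtil t ω), -(α t • ∑ q, p q • g t q ω)⟫
          = -(α t * ⟪gradient F (wtil t ω), ∑ q, p q • g t q ω⟫) := by
        rw [inner_neg_right, real_inner_smul_right]
      have h2 : ‖-(α t • ∑ q, p q • g t q ω)‖ ^ 2
          = α t ^ 2 * ‖∑ q, p q • g t q ω‖ ^ 2 := by
        rw [norm_neg, norm_smul, mul_pow, Real.norm_eq_abs, sq_abs]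
      rw [h1, h2] at h0
      linarith
    have hint_rhs : Integrable (fun ω =>
        F (wtil t ω) - α t * ⟪gradient F (wtil t ω), ∑ q, p q • g t q ω⟫
          + (L/2 * α t ^ 2) * ‖∑ q, p q • g t q ω‖ ^ 2) μ :=
      ((hint_F t).sub (hinner_int.const_mul (α t))).add ((hGsq_int t).const_mul _)
    have hIa : Integrable (fun ω =>
        F (wtil t ω) - α t * ⟪gradient F (wtil t ω), ∑ q, p q • g t q ω⟫) μ :=
      (hint_F t).sub (hinner_int.const_mul (α t))
    have hIb : Integrable (fun ω =>
        (L/2 * α t ^ 2) * ‖∑ q, p q • g t q ω‖ ^ 2) μ := (hGsq_int t).const_mul _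
    have hle1 := integral_mono (hint_F (t+1)) hint_rhs
      (fun ω => hdesc ω)
    rw [integral_add hIa hIb,
      integral_sub (hint_F t) (hinner_int.const_mul (α t)),
      integral_const_mul, integral_const_mul] at hle1
    -- unbiasedness
    have hinner_eq : ∫ ω, ⟪gradient F (wtil t ω), ∑ q, p q • g t q ω⟫ ∂μ
        = ∫ ω, ⟪gradient F (wtil t ω), gradient F (w t ω)⟫ ∂μ :=
      sgd_integral_inner_condExp (ℱ.le t)
        (hgradcont.comp_stronglyMeasurable (hadapt_wtil t))
        hgradwtil (hG2 t) hgradw (hunbiased t)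
    -- lower bound for the inner product
    have hinner_lb : (1:ℝ)/2 * (∫ ω, ‖gradient F (w t ω)‖ ^ 2 ∂μ)
          - L ^ 2/2 * (∫ ω, ‖∑ q, p q • ε t q ω‖ ^ 2 ∂μ)
        ≤ ∫ ω, ⟪gradient F (wtil t ω), gradient F (w t ω)⟫ ∂μ := by
      have hpt : ∀ ω, 1/2 * ‖gradient F (w t ω)‖ ^ 2
            - L ^ 2/2 * ‖∑ q, p q • ε t q ω‖ ^ 2
          ≤ ⟪gradient F (wtil t ω), gradient F (w t ω)⟫ := by
        intro ω
        have hlip := hFlip (wtil t ω) (w t ω)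
        have hwe : ‖wtil t ω - w t ω‖ = ‖∑ q, p q • ε t q ω‖ := by
          rw [norm_sub_rev, ← he_eq t ω]
        rw [hwe] at hlip
        have hns := norm_sub_sq_real (gradient F (wtil t ω)) (gradient F (w t ω))
        have h3 : ‖gradient F (wtil t ω) - gradient F (w t ω)‖ ^ 2
            ≤ L ^ 2 * ‖∑ q, p q • ε t q ω‖ ^ 2 := by
          have := pow_le_pow_left₀ (norm_nonneg _) hlip 2
          rw [mul_pow] at this
          exact this
        nlinarith [sq_nonneg ‖gradient F (wtil t ω)‖]
      have hI := integral_mono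
        (((hint_grad t).const_mul (1/2)).sub ((hesq_int t).const_mul (L ^ 2/2)))
        hinner_int2 hpt
      simp only [Pi.sub_apply] at hI
      rw [integral_sub ((hint_grad t).const_mul (1/2)) ((hesq_int t).const_mul (L ^ 2/2)),
        integral_const_mul, integral_const_mul] at hI
      exact hI
    -- combine everything
    have hmul1 : α t * ((1:ℝ)/2 * (∫ ω, ‖gradient F (w t ω)‖ ^ 2 ∂μ)
          - L ^ 2/2 * (∫ ω, ‖∑ q, p q • ε t q ω‖ ^ 2 ∂μ))
        ≤ α t * ∫ ω, ⟪gradient F (wtil t ω), gradient F (w t ω)⟫ ∂μ :=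
      mul_le_mul_of_nonneg_left hinner_lb (hα t).le
    have hmul2 : (L/2 * α t ^ 2) * (∫ ω, ‖∑ q, p q • g t q ω‖ ^ 2 ∂μ)
        ≤ (L/2 * α t ^ 2) * M :=
      mul_le_mul_of_nonneg_left (hM t) (by positivity)
    have hk2 := hkey2 t
    rw [hinner_eq] at hle1
    nlinarith [hle1, hmul1, hmul2, hk2]
  -- sum over t
  intro T
  have htel : ∑ t ∈ range (T+1),
      ((∫ ω, F (wtil t ω) ∂μ) - ∫ ω, F (wtil (t+1) ω) ∂μ)
      = (∫ ω, F (wtil 0 ω) ∂μ) - ∫ ω, F (wtil (T+1) ω) ∂μ :=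
    Finset.sum_range_sub' (fun t => ∫ ω, F (wtil t ω) ∂μ) (T+1)
  have h0 : ∫ ω, F (wtil 0 ω) ∂μ = F w₀ := by
    have hconst : (fun ω => F (wtil 0 ω)) = fun _ => F w₀ := by
      funext ω; rw [hwtil0 ω]
    rw [hconst, integral_const]
    simp
  have hT1 : Fstar ≤ ∫ ω, F (wtil (T+1) ω) ∂μ := by
    have := integral_mono (integrable_const Fstar) (hint_F (T+1))
      (fun ω => hFstar (wtil (T+1) ω))
    rwa [integral_const, probReal_univ, smul_eq_mul, one_mul] at this
  have hsum : ∑ t ∈ range (T+1), α t * ∫ ω, ‖gradient F (w t ω)‖ ^ 2 ∂μ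
      ≤ 2 * (F w₀ - Fstar) + (L * M + c2) * ∑ t ∈ range (T+1), α t ^ 2 := by
    calc ∑ t ∈ range (T+1), α t * ∫ ω, ‖gradient F (w t ω)‖ ^ 2 ∂μ
        ≤ ∑ t ∈ range (T+1),
            (2 * ((∫ ω, F (wtil t ω) ∂μ) - ∫ ω, F (wtil (t+1) ω) ∂μ)
              + L * M * α t ^ 2 + c2 * α t ^ 2) :=
          Finset.sum_le_sum fun t _ => hΦstep t
      _ = 2 * ((∫ ω, F (wtil 0 ω) ∂μ) - ∫ ω, F (wtil (T+1) ω) ∂μ)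
            + (L * M + c2) * ∑ t ∈ range (T+1), α t ^ 2 := by
          rw [Finset.sum_add_distrib, Finset.sum_add_distrib, ← Finset.mul_sum, htel,
            ← Finset.mul_sum, ← Finset.mul_sum]
          ring
      _ ≤ 2 * (F w₀ - Fstar) + (L * M + c2) * ∑ t ∈ range (T+1), α t ^ 2 := by
          rw [h0]
          have : F w₀ - ∫ ω, F (wtil (T+1) ω) ∂μ ≤ F w₀ - Fstar := by linarith
          linarith
  have hSα : 0 < ∑ t ∈ range (T+1), α t :=
    Finset.sum_pos (fun t _ => hα t) ⟨0, by simp⟩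
  calc (1 / ∑ t ∈ range (T + 1), α t) *
        ∑ t ∈ range (T + 1), α t * ∫ ω, ‖gradient F (w t ω)‖ ^ 2 ∂μ
      ≤ (1 / ∑ t ∈ range (T + 1), α t) *
        (2 * (F w₀ - Fstar) + (L * M + c2) * ∑ t ∈ range (T+1), α t ^ 2) :=
        mul_le_mul_of_nonneg_left hsum (by positivity)
    _ = (2 / ∑ t ∈ range (T + 1), α t) * (F w₀ - Fstar) +
          (L * M + c2) * ((∑ t ∈ range (T + 1), (α t) ^ 2) / ∑ t ∈ range (T + 1), α t) := by
        field_simp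
        try ring
end

section
/- (Satisfiability of the step-size condition (5) for polynomial step sizes.) Let γ ∈ (0,1) and λ > 0 satisfy (1 + λ)(1 − γ) < 1, let θ ∈ (1/2, 1], and set α_t = (t + 1)^{−θ} for t ≥ 0. Then there exists a constant D > 0 such that for every t ≥ 1, (1/(1 − γ)) Σ_{i=1}^t ((1 + λ)(1 − γ))^i · α_{t−i}²/α_t ≤ D. -/
open Finset

/-- satisfiability of the step-size condition for polynomial step sizes:
for `γ ∈ (0,1)`, `λ > 0` with `(1+λ)(1−γ) < 1`, `θ ∈ (1/2, 1]`, and `α_t = (t+1)^{−θ}`,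
there is `D > 0` with `(1/(1−γ)) Σ_{i=1}^t ((1+λ)(1−γ))^i α_{t−i}²/α_t ≤ D` for all `t ≥ 1`. -/
theorem stepsize_condition_satisfiable
    {γ lam θ : ℝ} (hγ0 : 0 < γ) (hγ1 : γ < 1) (hlam : 0 < lam)
    (hcontr : (1 + lam) * (1 - γ) < 1) (hθ1 : 1 / 2 < θ) (hθ2 : θ ≤ 1)
    (α : ℕ → ℝ) (hα : ∀ t : ℕ, α t = ((t : ℝ) + 1) ^ (-θ)) :
    ∃ D > 0, ∀ t : ℕ, 1 ≤ t →
      (1 / (1 - γ)) *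
        ∑ i ∈ Icc 1 t, ((1 + lam) * (1 - γ)) ^ i * (α (t - i)) ^ 2 / α t ≤ D := by
  have hγ' : 0 < 1 - γ := by linarith
  set β : ℝ := (1 + lam) * (1 - γ) with hβdef
  have hβ0 : 0 < β := by positivity
  have hβ1 : β < 1 := hcontr
  have hβnorm : ‖β‖ < 1 := by rw [Real.norm_eq_abs, abs_of_pos hβ0]; exact hβ1
  have hθ0 : 0 < θ := by linarith
  have hS1 : HasSum (fun n : ℕ => (n : ℝ) * β ^ n) (β / (1 - β) ^ 2) :=
    hasSum_coe_mul_geometric_of_norm_lt_one hβnorm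
  have hS2 : HasSum (fun n : ℕ => β ^ n) (1 - β)⁻¹ :=
    hasSum_geometric_of_lt_one hβ0.le hβ1
  have hS : HasSum (fun n : ℕ => ((n : ℝ) + 1) * β ^ n) (β / (1 - β) ^ 2 + (1 - β)⁻¹) := by
    have h := hS1.add hS2
    convert h using 2 with n
    ring
  set S : ℝ := β / (1 - β) ^ 2 + (1 - β)⁻¹ with hSdef
  have h1β : 0 < 1 - β := by linarith
  have hSpos : 0 < S := by positivity
  refine ⟨(1 / (1 - γ)) * S, by positivity, fun t ht => ?_⟩
  have key : ∑ i ∈ Icc 1 t, β ^ i * (α (t - i)) ^ 2 / α t ≤ S := by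
    calc ∑ i ∈ Icc 1 t, β ^ i * (α (t - i)) ^ 2 / α t
        ≤ ∑ i ∈ Icc 1 t, ((i : ℝ) + 1) * β ^ i := by
          apply Finset.sum_le_sum
          intro i hi
          obtain ⟨hi1, hi2⟩ := Finset.mem_Icc.mp hi
          have hit : (i : ℝ) ≤ (t : ℝ) := by exact_mod_cast hi2
          have hi0 : (0 : ℝ) ≤ (i : ℝ) := Nat.cast_nonneg i
          set a : ℝ := ((t : ℝ) - (i : ℝ)) + 1 with hadef
          set b : ℝ := (t : ℝ) + 1 with hbdef
          have ha1 : 1 ≤ a := by simp only [hadef]; linarith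
          have ha0 : 0 < a := by linarith
          have hb0 : 0 < b := by simp only [hbdef]; positivity
          have hcast : ((t - i : ℕ) : ℝ) = (t : ℝ) - (i : ℝ) := by
            push_cast [Nat.cast_sub hi2]; ring
          have hαti : α (t - i) = a ^ (-θ) := by rw [hα, hcast]
          have hαt : α t = b ^ (-θ) := hα t
          have hterm : (α (t - i)) ^ 2 / α t = a ^ (-(2 * θ)) * b ^ θ := by
            rw [hαti, hαt]
            rw [← Real.rpow_natCast (a ^ (-θ)) 2, ← Real.rpow_mul ha0.le]
            rw [Real.rpow_neg hb0.le, div_eq_mul_inv, inv_inv]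
            congr 1
            push_cast
            ring
          rw [mul_div_assoc, hterm]
          have step1 : a ^ (-(2 * θ)) ≤ a ^ (-θ) :=
            Real.rpow_le_rpow_of_exponent_le ha1 (by linarith)
          have step2 : a ^ (-θ) * b ^ θ = (b / a) ^ θ := by
            rw [Real.div_rpow hb0.le ha0.le, Real.rpow_neg ha0.le]
            ring
          have hba : b / a ≤ (i : ℝ) + 1 := by
            rw [div_le_iff₀ ha0]
            simp only [hbdef, hadef]
            nlinarith
          have step3 : (b / a) ^ θ ≤ ((i : ℝ) + 1) ^ θ :=
            Real.rpow_le_rpow (by positivity) hba hθ0.le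
          have step4 : ((i : ℝ) + 1) ^ θ ≤ (i : ℝ) + 1 := by
            calc ((i : ℝ) + 1) ^ θ ≤ ((i : ℝ) + 1) ^ (1 : ℝ) :=
                Real.rpow_le_rpow_of_exponent_le (by linarith) hθ2
              _ = (i : ℝ) + 1 := Real.rpow_one _
          have habθ : a ^ (-(2 * θ)) * b ^ θ ≤ (i : ℝ) + 1 := by
            calc a ^ (-(2 * θ)) * b ^ θ ≤ a ^ (-θ) * b ^ θ := by
                  apply mul_le_mul_of_nonneg_right step1 (Real.rpow_nonneg hb0.le θ)
              _ = (b / a) ^ θ := step2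
              _ ≤ ((i : ℝ) + 1) ^ θ := step3
              _ ≤ (i : ℝ) + 1 := step4
          calc β ^ i * (a ^ (-(2 * θ)) * b ^ θ) ≤ β ^ i * ((i : ℝ) + 1) := by
                apply mul_le_mul_of_nonneg_left habθ (by positivity)
            _ = ((i : ℝ) + 1) * β ^ i := by ring
      _ ≤ S := sum_le_hasSum _ (fun n _ => by positivity) hS
  calc (1 / (1 - γ)) * ∑ i ∈ Icc 1 t, β ^ i * (α (t - i)) ^ 2 / α t
      ≤ (1 / (1 - γ)) * S := by
        apply mul_le_mul_of_nonneg_left key (by positivity)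
    _ = (1 / (1 - γ)) * S := rfl
end
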